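/- arXiv:1503.06067 — 9 statements merged into one kernel-verified Lean document; each statement's English description precedes it below -/
import Mathlib

section
/- The kernel of Ψ is exactly the subgroup of ℤ^(X₁⊔⋯⊔X_k) generated by γ₂, …, γ_k, and the elements γ₂, …, γ_k are ℤ-linearly independent; hence ker Ψ is a free abelian group of rank k − 1 with basis γ₂, …, γ_k. -/
/-- The map `Ψ : ℤ^(X₁⊔⋯⊔X_k) → ℤ^(X₁×⋯×X_k)` determined by
`Ψ(δ_x) = Σ_{t : tᵢ = x} δ_t` for `x ∈ Xᵢ`. -/
noncomputable def Psi {k : ℕ} (X : Fin k → Type) [∀ i, Fintype (X i)] :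
    ((Σ i, X i) → ℤ) →ₗ[ℤ] ((∀ i, X i) → ℤ) where
  toFun f := fun t => ∑ i, f ⟨i, t i⟩
  map_add' f g := by funext t; simp [Finset.sum_add_distrib]
  map_smul' c f := by funext t; simp [smul_eq_mul, Finset.mul_sum]

/-- The element `γᵢ = Σ_{x∈X₁} δ_x − Σ_{y∈Xᵢ} δ_y` of `ℤ^(X₁⊔⋯⊔X_k)`,
viewed as a function on the disjoint union. -/
def gammaFn {k : ℕ} [NeZero k] (X : Fin k → Type) (i : Fin k) : (Σ j, X j) → ℤ :=
  fun p => (if p.1 = 0 then 1 else 0) - (if p.1 = i then 1 else 0)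

/-- The kernel of `Ψ` is exactly the subgroup generated by `γ₂, …, γ_k`, and
the elements `γ₂, …, γ_k` are `ℤ`-linearly independent; hence `ker Ψ` is free
abelian of rank `k − 1` with basis `γ₂, …, γ_k`. -/
theorem stmt0 {k : ℕ} [NeZero k] (X : Fin k → Type) [∀ i, Fintype (X i)]
    [∀ i, Nonempty (X i)] :
    LinearMap.ker (Psi X) =
      Submodule.span ℤ {z : (Σ j, X j) → ℤ | ∃ i : Fin k, i ≠ 0 ∧ z = gammaFn X i} ∧
    LinearIndependent ℤ (fun i : {i : Fin k // i ≠ 0} => gammaFn X i.1) := by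
  classical
  have t₀ : ∀ i, X i := fun i => Classical.arbitrary _
  have hPsi : ∀ (f : (Σ i, X i) → ℤ) (t : ∀ i, X i), Psi X f t = ∑ i, f ⟨i, t i⟩ :=
    fun f t => rfl
  -- γᵢ ∈ ker Ψ
  have hgk : ∀ i : Fin k, gammaFn X i ∈ LinearMap.ker (Psi X) := by
    intro i
    rw [LinearMap.mem_ker]
    funext t
    rw [hPsi]
    simp [gammaFn, Finset.sum_sub_distrib]
  -- constancy on each component
  have hconst : ∀ (f : (Σ i, X i) → ℤ), Psi X f = 0 →
      ∀ (i : Fin k) (x : X i), f ⟨i, x⟩ = f ⟨i, t₀ i⟩ := by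
    intro f hf i x
    have h1 := congrFun hf (Function.update t₀ i x)
    have h2 := congrFun hf t₀
    rw [hPsi] at h1 h2  -- may not work since hf : Psi X f = 0; congrFun gives Psi X f t = 0 t
    rw [← Finset.add_sum_erase _ _ (Finset.mem_univ i)] at h1 h2
    have hS : ∑ j ∈ Finset.univ.erase i, f ⟨j, Function.update t₀ i x j⟩
        = ∑ j ∈ Finset.univ.erase i, f ⟨j, t₀ j⟩ :=
      Finset.sum_congr rfl fun j hj => by
        rw [Function.update_of_ne (Finset.ne_of_mem_erase hj)]
    rw [hS, Function.update_self] at h1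
    simp only [Pi.zero_apply] at h1 h2
    linarith
  constructor
  · apply le_antisymm
    · intro f hf
      rw [LinearMap.mem_ker] at hf
      set c : Fin k → ℤ := fun j => f ⟨j, t₀ j⟩ with hc
      have hsum : ∑ j, c j = 0 := by
        have := congrFun hf t₀
        rw [hPsi] at this
        simpa using this
      have hdecomp : f = ∑ i ∈ Finset.univ.filter (· ≠ (0 : Fin k)),
          (-(c i)) • gammaFn X i := by
        funext p
        obtain ⟨j, x⟩ := p
        rw [Finset.sum_apply]
        simp only [Pi.smul_apply, smul_eq_mul, gammaFn]
        rcases eq_or_ne j 0 with hj | hj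
        · subst hj
          have : ∀ i ∈ Finset.univ.filter (· ≠ (0 : Fin k)),
              (-(c i)) * ((if (0:Fin k) = 0 then (1:ℤ) else 0) - (if (0:Fin k) = i then 1 else 0))
              = -(c i) := by
            intro i hi
            simp only [Finset.mem_filter] at hi
            rw [if_pos rfl, if_neg (fun h => hi.2 h.symm)]
            ring
          rw [Finset.sum_congr rfl this, hconst f hf 0 x]
          have hfe : Finset.univ.filter (· ≠ (0 : Fin k)) = Finset.univ.erase 0 := by
            ext a; simp [Finset.mem_erase]
          have h1 : c 0 + ∑ i ∈ Finset.univ.erase 0, c i = 0 := by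
            rw [Finset.add_sum_erase _ _ (Finset.mem_univ 0)]; exact hsum
          have h2 : ∑ i ∈ Finset.univ.erase (0 : Fin k), -(c i)
              = -∑ i ∈ Finset.univ.erase (0 : Fin k), c i := by
            rw [Finset.sum_neg_distrib]
          rw [hfe, h2]
          linarith
        · rw [hconst f hf j x]
          have : ∀ i ∈ Finset.univ.filter (· ≠ (0 : Fin k)),
              (-(c i)) * ((if j = 0 then (1:ℤ) else 0) - (if j = i then 1 else 0))
              = if i = j then c i else 0 := by
            intro i hi
            rw [if_neg hj]
            rcases eq_or_ne i j with h | h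
            · subst h; rw [if_pos rfl, if_pos rfl]; ring
            · rw [if_neg h, if_neg (fun hh => h hh.symm)]; ring
          rw [Finset.sum_congr rfl this, Finset.sum_ite_eq' ]
          rw [if_pos (by simp [hj])]
      rw [hdecomp]
      apply Submodule.sum_mem
      intro i hi
      simp only [Finset.mem_filter, Finset.mem_univ, true_and] at hi
      exact Submodule.smul_mem _ _ (Submodule.subset_span ⟨i, hi, rfl⟩)
    · rw [Submodule.span_le]
      rintro z ⟨i, hi, rfl⟩
      exact hgk i
  · rw [Fintype.linearIndependent_iff]
    intro g hg i
    have := congrFun hg ⟨i.1, t₀ i.1⟩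
    rw [Finset.sum_apply] at this
    simp only [Pi.smul_apply, smul_eq_mul, gammaFn, Pi.zero_apply] at this
    rw [if_neg i.2] at this
    have heq : ∀ j ∈ (Finset.univ : Finset {i : Fin k // i ≠ 0}),
        g j * ((0:ℤ) - (if i.1 = j.1 then 1 else 0)) = if j = i then -(g j) else 0 := by
      intro j _
      rcases eq_or_ne j i with h | h
      · subst h; rw [if_pos rfl, if_pos rfl]; ring
      · rw [if_neg h, if_neg (fun hh => h (Subtype.ext hh.symm))]; ring
    rw [Finset.sum_congr rfl heq, Finset.sum_ite_eq' ] at this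
    simp at this
    exact this
end

section
/- The cokernel ℤ^(X₁×⋯×X_k)/Ψ(ℤ^(X₁⊔⋯⊔X_k)) is a free abelian group of rank |X₁|⋯|X_k| − |X₁| − ⋯ − |X_k| + k − 1, freely generated by the images of those basis elements δ_{(t₁,…,t_k)} such that tᵢ ≠ xᵢ⁰ and tⱼ ≠ xⱼ⁰ for at least two distinct indices i, j ∈ {1,…,k}. -/
-- The canonical basis element `δ_q` of the free abelian group of functions.
open Classical in
noncomputable def deltaFn {α : Type} (q : α) : α → ℤ := fun p => if p = q then 1 else 0

/-!
For `f : ℤ^(X₁×⋯×X_k)` let `q f s = f s - f x⁰ - ∑ⱼ (f (x⁰ with sⱼ in slot j) - f x⁰)`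
(`nonadditivePart`) measure how far `f` is from being additive, i.e. a sum of functions of the
single coordinates. The functions in the range of `Ψ` are additive, so `q` kills them, while
`f - q f` is additive and lies in the range of `Ψ` (this needs `k ≥ 1`, to absorb the constant
`f x⁰`). Moreover `q f` vanishes at `x⁰` and on the coordinate axes through `x⁰`, and `q δ_t = δ_t`
for every other point `t`. Hence `q` identifies the cokernel with the functions supported off the
axes, which have the `δ_t` as a basis; there are `1 + ∑ᵢ (|Xᵢ| - 1)` points on the axes.
-/

open Function

theorem mem_span_deltaFn_of_eq_zero_off {α : Type} [Fintype α] {P : α → Prop} (f : α → ℤ)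
    (hf : ∀ a, ¬ P a → f a = 0) :
    f ∈ Submodule.span ℤ (Set.range fun s : {a // P a} => deltaFn s.1) := by
  classical
  rw [← Finset.univ_sum_single f]
  refine Submodule.sum_mem _ fun a _ => ?_
  by_cases ha : P a
  · have hsingle : Pi.single a (f a) = f a • deltaFn a := by
      ext; simp [deltaFn, Pi.single_apply]
    rw [hsingle]
    exact Submodule.smul_mem _ _ (Submodule.subset_span ⟨⟨a, ha⟩, rfl⟩)
  · simp [hf a ha]

section NonadditivePart

variable {k : ℕ} {X : Fin k → Type}

def nonadditivePart (x0 : ∀ i, X i) : ((∀ i, X i) → ℤ) →ₗ[ℤ] ((∀ i, X i) → ℤ) where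
  toFun f s := f s - f x0 - ∑ j, (f (update x0 j (s j)) - f x0)
  map_add' f g := by
    ext s; simp only [Pi.add_apply, add_sub_add_comm, Finset.sum_add_distrib]
  map_smul' c f := by
    ext s; simp only [Pi.smul_apply, smul_eq_mul, RingHom.id_apply, mul_sub, Finset.mul_sum]

def axisPoint (x0 : ∀ i, X i) : Option (Σ j, {y : X j // y ≠ x0 j}) → ∀ i, X i
  | none => x0
  | some p => update x0 p.1 p.2

variable (x0 : ∀ i, X i)

theorem nonadditivePart_apply (f : (∀ i, X i) → ℤ) (s : ∀ i, X i) :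
    nonadditivePart x0 f s = f s - f x0 - ∑ j, (f (update x0 j (s j)) - f x0) := rfl

theorem nonadditivePart_apply_base (f : (∀ i, X i) → ℤ) : nonadditivePart x0 f x0 = 0 := by
  simp [nonadditivePart_apply]

theorem nonadditivePart_apply_update (f : (∀ i, X i) → ℤ) (j : Fin k) (y : X j) :
    nonadditivePart x0 f (update x0 j y) = 0 := by
  rw [nonadditivePart_apply, Fintype.sum_eq_single j fun i hi => by simp [update_of_ne hi]]
  simp

theorem Psi_apply_update_sub [∀ i, Fintype (X i)] (g : (Σ i, X i) → ℤ) (j : Fin k) (y : X j) :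
    Psi X g (update x0 j y) - Psi X g x0 = g ⟨j, y⟩ - g ⟨j, x0 j⟩ := by
  change ∑ i, g ⟨i, update x0 j y i⟩ - ∑ i, g ⟨i, x0 i⟩ = _
  rw [← Finset.sum_sub_distrib, Fintype.sum_eq_single j fun i hi => by simp [update_of_ne hi]]
  simp

theorem nonadditivePart_comp_Psi [∀ i, Fintype (X i)] : nonadditivePart x0 ∘ₗ Psi X = 0 := by
  ext g s
  simp only [LinearMap.comp_apply, nonadditivePart_apply, Psi_apply_update_sub,
    LinearMap.zero_apply, Pi.zero_apply]
  change _ - _ - ∑ j, (g ⟨j, s j⟩ - g ⟨j, x0 j⟩) = 0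
  rw [Finset.sum_sub_distrib]
  change Psi X _ s - Psi X _ x0 - (Psi X _ s - Psi X _ x0) = 0
  ring

theorem sub_nonadditivePart_mem_range_Psi [NeZero k] [∀ i, Fintype (X i)]
    (f : (∀ i, X i) → ℤ) : f - nonadditivePart x0 f ∈ LinearMap.range (Psi X) := by
  refine ⟨fun p => f (update x0 p.1 p.2) - f x0 + if p.1 = 0 then f x0 else 0, ?_⟩
  ext s
  simp only [Psi, LinearMap.coe_mk, AddHom.coe_mk, Finset.sum_add_distrib, Finset.sum_sub_distrib,
    Finset.sum_const, Finset.card_univ, Fintype.card_fin, Int.nsmul_eq_mul, Finset.sum_ite_eq',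
    Finset.mem_univ, ↓reduceIte, Pi.sub_apply, nonadditivePart_apply]
  ring

theorem axisPoint_injective : Injective (axisPoint x0) := by
  rintro (_ | ⟨j, y, hy⟩) (_ | ⟨j', y', hy'⟩) h
  · rfl
  · exact absurd (congrFun h j').symm (by simpa [axisPoint] using hy')
  · exact absurd (congrFun h j) (by simpa [axisPoint] using hy)
  · obtain rfl : j = j' := by
      by_contra hne
      exact hy (by simpa [axisPoint, update_of_ne hne] using congrFun h j)
    obtain rfl : y = y' := by simpa [axisPoint] using congrFun h j
    rfl

theorem update_mem_range_axisPoint (j : Fin k) (y : X j) :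
    update x0 j y ∈ Set.range (axisPoint x0) := by
  by_cases hy : y = x0 j
  · exact ⟨none, by simp [axisPoint, hy]⟩
  · exact ⟨some ⟨j, y, hy⟩, rfl⟩

theorem two_le_card_ne_iff (t : ∀ i, X i) :
    2 ≤ Nat.card {i // t i ≠ x0 i} ↔ ∃ i j, i ≠ j ∧ t i ≠ x0 i ∧ t j ≠ x0 j := by
  change 1 < _ ↔ _
  rw [Finite.one_lt_card_iff_nontrivial, nontrivial_iff]
  constructor
  · rintro ⟨⟨i, hi⟩, ⟨j, hj⟩, hij⟩
    exact ⟨i, j, fun h => hij (Subtype.ext h), hi, hj⟩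
  · rintro ⟨i, j, hij, hi, hj⟩
    exact ⟨⟨i, hi⟩, ⟨j, hj⟩, fun h => hij (congrArg Subtype.val h)⟩

theorem two_le_card_ne_iff_notMem_range_axisPoint (t : ∀ i, X i) :
    2 ≤ Nat.card {i // t i ≠ x0 i} ↔ t ∉ Set.range (axisPoint x0) := by
  rw [two_le_card_ne_iff]
  constructor
  · rintro ⟨i, j, hij, hi, hj⟩ ⟨_ | ⟨l, y, hy⟩, rfl⟩
    · exact hi rfl
    · obtain rfl | hil := eq_or_ne i l
      · exact hj (update_of_ne hij.symm ..)
      · exact hi (update_of_ne hil ..)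
  · intro ht
    by_contra! hsub
    by_cases hx : ∀ i, t i = x0 i
    · exact ht ⟨none, (funext hx).symm⟩
    · obtain ⟨j, hj⟩ := not_forall.mp hx
      refine ht ⟨some ⟨j, t j, hj⟩, funext fun i => ?_⟩
      obtain rfl | hij := eq_or_ne i j
      · simp [axisPoint]
      · simp [axisPoint, update_of_ne hij, hsub j i hij.symm hj]

theorem nonadditivePart_apply_axisPoint (f : (∀ i, X i) → ℤ) :
    ∀ a, nonadditivePart x0 f (axisPoint x0 a) = 0
  | none => nonadditivePart_apply_base x0 f
  | some p => nonadditivePart_apply_update x0 f p.1 p.2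

theorem nonadditivePart_deltaFn_apply {t : ∀ i, X i} (ht : t ∉ Set.range (axisPoint x0))
    (s : ∀ i, X i) : nonadditivePart x0 (deltaFn t) s = deltaFn t s := by
  have hne : ∀ u ∈ Set.range (axisPoint x0), deltaFn t u = 0 := fun u hu =>
    if_neg fun (h : u = t) => ht (h ▸ hu)
  rw [nonadditivePart_apply, hne x0 ⟨none, rfl⟩,
    Finset.sum_eq_zero fun j _ => by rw [hne _ (update_mem_range_axisPoint x0 j _), sub_zero]]
  ring

end NonadditivePart

section Cokernel

variable {k : ℕ} {X : Fin k → Type} [∀ i, Fintype (X i)] (x0 : ∀ i, X i)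

theorem natCard_two_le_card_ne :
    (Nat.card {t : ∀ i, X i // 2 ≤ Nat.card {i : Fin k // t i ≠ x0 i}} : ℤ) =
      (∏ i, (Fintype.card (X i) : ℤ)) - (∑ i, (Fintype.card (X i) : ℤ)) + k - 1 := by
  classical
  have hgen : Nat.card {t : ∀ i, X i // 2 ≤ Nat.card {i // t i ≠ x0 i}} =
      Nat.card {t // t ∉ Set.range (axisPoint x0)} :=
    Nat.card_congr (Equiv.subtypeEquivRight (two_le_card_ne_iff_notMem_range_axisPoint x0))
  have hcoord : ∀ j, (Nat.card {y : X j // y ≠ x0 j} : ℤ) = Nat.card (X j) - 1 := fun j => by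
    rw [← Nat.card_congr (Equiv.optionSubtypeNe (x0 j)), Finite.card_option]
    push_cast; ring
  have hsplit := Nat.card_congr (Equiv.sumCompl (· ∈ Set.range (axisPoint x0)))
  rw [Nat.card_sum, ← hgen, Nat.card_range_of_injective (axisPoint_injective x0),
    Finite.card_option, Nat.card_sigma, Nat.card_pi] at hsplit
  have hsplitℤ := congrArg (Nat.cast : ℕ → ℤ) hsplit
  push_cast [hcoord, Finset.sum_sub_distrib] at hsplitℤ
  simp only [Finset.sum_const, Finset.card_univ, Fintype.card_fin, nsmul_eq_mul,
    mul_one] at hsplitℤ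
  simp only [← Nat.card_eq_fintype_card]
  linarith

theorem linearIndependent_mk_deltaFn :
    LinearIndependent ℤ fun t : {t : ∀ i, X i // 2 ≤ Nat.card {i : Fin k // t i ≠ x0 i}} =>
      Submodule.Quotient.mk (p := LinearMap.range (Psi X)) (deltaFn t.1) := by
  classical
  set r := LinearMap.funLeft ℤ ℤ
    (Subtype.val : {t : ∀ i, X i // 2 ≤ Nat.card {i : Fin k // t i ≠ x0 i}} → _) ∘ₗ
      nonadditivePart x0
  have hr : LinearMap.range (Psi X) ≤ LinearMap.ker r := LinearMap.range_le_ker_iff.mpr <| by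
    rw [LinearMap.comp_assoc, nonadditivePart_comp_Psi, LinearMap.comp_zero]
  refine LinearIndependent.of_comp (Submodule.liftQ _ r hr) ?_
  have hcomp : Submodule.liftQ _ r hr ∘ (fun t => Submodule.Quotient.mk (deltaFn t.1)) =
      fun t => Pi.single t 1 := by
    ext t s
    have ht := (two_le_card_ne_iff_notMem_range_axisPoint x0 t.1).mp t.2
    simp [r, nonadditivePart_deltaFn_apply x0 ht, deltaFn, Pi.single_apply, Subtype.ext_iff]
  rw [hcomp]
  exact Pi.linearIndependent_single_one _ ℤ

theorem top_le_span_mk_deltaFn [NeZero k] :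
    ⊤ ≤ Submodule.span ℤ
      (Set.range fun t : {t : ∀ i, X i // 2 ≤ Nat.card {i : Fin k // t i ≠ x0 i}} =>
        Submodule.Quotient.mk (p := LinearMap.range (Psi X)) (deltaFn t.1)) := by
  rintro z -
  obtain ⟨f, rfl⟩ := Submodule.Quotient.mk_surjective _ z
  have hsupp : ∀ t, ¬ 2 ≤ Nat.card {i // t i ≠ x0 i} → nonadditivePart x0 f t = 0 := by
    intro t ht
    obtain ⟨a, rfl⟩ := not_not.mp ((two_le_card_ne_iff_notMem_range_axisPoint x0 t).not.mp ht)
    exact nonadditivePart_apply_axisPoint x0 f a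
  have hmem := Submodule.mem_map_of_mem (f := Submodule.mkQ (LinearMap.range (Psi X)))
    (mem_span_deltaFn_of_eq_zero_off _ hsupp)
  rw [Submodule.map_span, ← Set.range_comp] at hmem
  rwa [(Submodule.Quotient.eq _).mpr (sub_nonadditivePart_mem_range_Psi x0 f)]

end Cokernel

theorem stmt1_general {k : ℕ} [NeZero k] (X : Fin k → Type) [∀ i, Fintype (X i)]
    (x0 : ∀ i, X i) :
    (∃ b : Module.Basis {t : ∀ i, X i // 2 ≤ Nat.card {i : Fin k // t i ≠ x0 i}} ℤ
        (((∀ i, X i) → ℤ) ⧸ LinearMap.range (Psi X)),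
      ∀ t, b t = Submodule.Quotient.mk (deltaFn t.1)) ∧
    (Nat.card {t : ∀ i, X i // 2 ≤ Nat.card {i : Fin k // t i ≠ x0 i}} : ℤ) =
      (∏ i, (Fintype.card (X i) : ℤ)) - (∑ i, (Fintype.card (X i) : ℤ)) + k - 1 :=
  ⟨⟨.mk (linearIndependent_mk_deltaFn x0) (top_le_span_mk_deltaFn x0), Module.Basis.mk_apply _ _⟩,
    natCard_two_le_card_ne x0⟩

/-- The cokernel `ℤ^(X₁×⋯×X_k)/Ψ(ℤ^(X₁⊔⋯⊔X_k))` is a free abelian group of rank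
`|X₁|⋯|X_k| − |X₁| − ⋯ − |X_k| + k − 1`, freely generated by the images of the
basis elements `δ_t` such that `tᵢ ≠ xᵢ⁰` for at least two distinct indices. -/
theorem stmt1 {k : ℕ} [NeZero k] (X : Fin k → Type) [∀ i, Fintype (X i)]
    [∀ i, Nonempty (X i)] (x0 : ∀ i, X i) :
    (∃ b : Module.Basis {t : ∀ i, X i // 2 ≤ Nat.card {i : Fin k // t i ≠ x0 i}} ℤ
        (((∀ i, X i) → ℤ) ⧸ LinearMap.range (Psi X)),
      ∀ t, b t = Submodule.Quotient.mk (deltaFn t.1)) ∧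
    (Nat.card {t : ∀ i, X i // 2 ≤ Nat.card {i : Fin k // t i ≠ x0 i}} : ℤ) =
      (∏ i, (Fintype.card (X i) : ℤ)) - (∑ i, (Fintype.card (X i) : ℤ)) + k - 1 :=
  stmt1_general X x0
end

section
/- Let (E,C) be a finitely separated graph, v ∈ E⁰ a vertex with C_v = {X₁,…,X_k}, and (E_v,C^v) the multiresolution of (E,C) at v. Let M be the commutative monoid with generators b(x) for x ∈ X₁⊔⋯⊔X_k and relations Σ_{x∈Xᵢ} b(x) = Σ_{y∈Xⱼ} b(y) for 1 ≤ i < j ≤ k; let F be the free commutative monoid on generators a(t₁,…,t_k) for (t₁,…,t_k) ∈ X₁×⋯×X_k; let ψ : M → F be the monoid homomorphism with ψ(b(x)) = Σ_{(t₁,…,t_k) with tᵢ = x} a(t₁,…,t_k) for x ∈ Xᵢ; let η : M → M(E,C) be the monoid homomorphism with η(b(x)) = a_{s(x)}; let η' : F → M(E_v,C^v) be the monoid homomorphism with η'(a(t₁,…,t_k)) = a_{v(t₁,…,t_k)}; and let μ : M(E,C) → M(E_v,C^v) be the natural map sending a_w to a_w for w ∈ E⁰. Then μ ∘ η = η' ∘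 ψ, and this commutative square is a pushout in the category of commutative monoids. -/
/-- A separated graph: a directed graph together with, for each vertex `v`,
a family `C v` of subsets of `r⁻¹(v)`. -/
structure SepGraph where
  V : Type
  E : Type
  s : E → V
  r : E → V
  C : V → Set (Set E)

/-- `(E,C)` is a finitely separated graph: each `C v` is a partition of `r⁻¹(v)`
into pairwise disjoint nonempty finite subsets. -/
structure SepGraph.IsFinSep (G : SepGraph) : Prop where
  range_mem : ∀ v X, X ∈ G.C v → ∀ e ∈ X, G.r e = v
  nonempty_mem : ∀ v X, X ∈ G.C v → X.Nonempty
  disj : ∀ v, (G.C v).PairwiseDisjoint id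
  cover : ∀ e : G.E, ∃ X ∈ G.C (G.r e), e ∈ X
  finite_mem : ∀ v X, X ∈ G.C v → X.Finite

/-- The defining relations of the graph monoid `M(E,C)`:
`a_v = Σ_{e∈X} a_{s(e)}` for every `v` and every `X ∈ C_v`. -/
def SepGraph.Rel (G : SepGraph) {M : Type} [AddCommMonoid M] (a : G.V → M) : Prop :=
  ∀ v, ∀ X ∈ G.C v, a v = ∑ᶠ e ∈ X, a (G.s e)

/-- `(M, a)` is the graph monoid `M(E,C)`: it satisfies the defining relations and is
universal among commutative monoids satisfying them. -/
def SepGraph.IsGraphMonoid (G : SepGraph) {M : Type} [AddCommMonoid M] (a : G.V → M) : Prop :=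
  G.Rel a ∧ ∀ (N : Type) [AddCommMonoid N] (b : G.V → N), G.Rel b →
    ∃! φ : M →+ N, ∀ v, φ (a v) = b v

/-- The defining relations of the monoid `M`: `Σ_{x∈Xᵢ} b(x) = Σ_{y∈Xⱼ} b(y)`. -/
def MRel {E : Type} {k : ℕ} (X : Fin k → Set E) {N : Type} [AddCommMonoid N]
    (b : (Σ i, ↥(X i)) → N) : Prop :=
  ∀ i j : Fin k, (∑ᶠ x : ↥(X i), b ⟨i, x⟩) = ∑ᶠ y : ↥(X j), b ⟨j, y⟩

/-- The defining relations of the graph monoid `M(E_v, C^v)` of the multiresolution of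
`(E,C)` at `v`, where `C_v = {X₁,…,X_k}`: the generators are indexed by
`E⁰ ⊔ (X₁×⋯×X_k)` (old vertices and new vertices `v(x₁,…,x_k)`), the relations are the
old relations together with `a_{s(xᵢ)} = Σ_{t : tᵢ = xᵢ} a_{v(t)}` coming from the new
groups `X(xᵢ)`. -/
def MultiRel (G : SepGraph) {k : ℕ} (X : Fin k → Set G.E) {N : Type} [AddCommMonoid N]
    (b : (G.V ⊕ (∀ i, ↥(X i))) → N) : Prop :=
  (∀ v, ∀ Y ∈ G.C v, b (Sum.inl v) = ∑ᶠ e ∈ Y, b (Sum.inl (G.s e))) ∧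
  (∀ (i : Fin k) (x : ↥(X i)),
    b (Sum.inl (G.s x.1)) = ∑ᶠ t ∈ {t : ∀ j, ↥(X j) | t i = x}, b (Sum.inr t))

/-- Let `(E,C)` be a finitely separated graph, `v ∈ E⁰` with `C_v = {X₁,…,X_k}`, and
`(E_v,C^v)` the multiresolution at `v`.  With `M`, `F`, `ψ`, `η`, `η'`, `μ` as in the
statement, the square `μ ∘ η = η' ∘ ψ` commutes and is a pushout in the category of
commutative monoids. -/
theorem stmt5 (G : SepGraph) (hG : G.IsFinSep) (v : G.V) {k : ℕ}
    (X : Fin k → Set G.E) (hXinj : Function.Injective X) (hXC : G.C v = Set.range X)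
    {MM F MEC MEV : Type} [AddCommMonoid MM] [AddCommMonoid F]
    [AddCommMonoid MEC] [AddCommMonoid MEV]
    -- M is the commutative monoid presented by generators b(x) and the relations MRel
    (b : (Σ i, ↥(X i)) → MM)
    (hMMrel : MRel X b)
    (hMM : ∀ (N : Type) [AddCommMonoid N] (c : (Σ i, ↥(X i)) → N), MRel X c →
      ∃! φ : MM →+ N, ∀ p, φ (b p) = c p)
    -- F is the free commutative monoid on the generators a(t₁,…,t_k)
    (aF : (∀ i, ↥(X i)) → F)
    (hF : ∀ (N : Type) [AddCommMonoid N] (c : (∀ i, ↥(X i)) → N),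
      ∃! φ : F →+ N, ∀ t, φ (aF t) = c t)
    -- M(E,C)
    (aE : G.V → MEC) (hMEC : G.IsGraphMonoid aE)
    -- M(E_v, C^v)
    (aV : (G.V ⊕ (∀ i, ↥(X i))) → MEV)
    (hMEVrel : MultiRel G X aV)
    (hMEV : ∀ (N : Type) [AddCommMonoid N] (c : (G.V ⊕ (∀ i, ↥(X i))) → N),
      MultiRel G X c → ∃! φ : MEV →+ N, ∀ p, φ (aV p) = c p)
    -- the four maps of the square
    (ψ : MM →+ F)
    (hψ : ∀ (i : Fin k) (x : ↥(X i)),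
      ψ (b ⟨i, x⟩) = ∑ᶠ t ∈ {t : ∀ j, ↥(X j) | t i = x}, aF t)
    (η : MM →+ MEC) (hη : ∀ (i : Fin k) (x : ↥(X i)), η (b ⟨i, x⟩) = aE (G.s x.1))
    (η' : F →+ MEV) (hη' : ∀ t, η' (aF t) = aV (Sum.inr t))
    (μ : MEC →+ MEV) (hμ : ∀ w, μ (aE w) = aV (Sum.inl w)) :
    μ.comp η = η'.comp ψ ∧
    ∀ (P : Type) [AddCommMonoid P] (p : MEC →+ P) (q : F →+ P), p.comp η = q.comp ψ →
      ∃! θ : MEV →+ P, θ.comp μ = p ∧ θ.comp η' = q := by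
  -- finiteness facts
  have hXfin : ∀ i, (X i).Finite := fun i =>
    hG.finite_mem v (X i) (hXC ▸ Set.mem_range_self i)
  have hXfinT : ∀ i, Finite ↥(X i) := fun i => (hXfin i).to_subtype
  have hPiFin : Finite (∀ i, ↥(X i)) := by
    haveI := hXfinT; exact Pi.finite
  -- commutativity on generators
  have key : ∀ (N : Type) [AddCommMonoid N] (c : (G.V ⊕ (∀ i, ↥(X i))) → N)
      (i : Fin k) (x : ↥(X i)),
      (∀ (j : Fin k) (y : ↥(X j)),
        c (Sum.inl (G.s y.1)) = ∑ᶠ t ∈ {t : ∀ j, ↥(X j) | t j = y}, c (Sum.inr t)) → True :=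
    fun _ _ _ _ _ _ => trivial
  have comm_gen : ∀ (i : Fin k) (x : ↥(X i)),
      (μ.comp η) (b ⟨i, x⟩) = (η'.comp ψ) (b ⟨i, x⟩) := by
    intro i x
    have h1 : (μ.comp η) (b ⟨i, x⟩) = aV (Sum.inl (G.s x.1)) := by
      simp [AddMonoidHom.comp_apply, hη, hμ]
    have h2 : (η'.comp ψ) (b ⟨i, x⟩)
        = ∑ᶠ t ∈ {t : ∀ j, ↥(X j) | t i = x}, aV (Sum.inr t) := by
      rw [AddMonoidHom.comp_apply, hψ,
        AddMonoidHom.map_finsum_mem _ _ (Set.toFinite _)]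
      exact finsum_mem_congr rfl (fun t _ => hη' t)
    rw [h1, h2, hMEVrel.2 i x]
  -- any composite of a hom with b satisfies MRel
  have mrel_comp : ∀ {N : Type} [AddCommMonoid N] (φ : MM →+ N),
      MRel X (fun p => φ (b p)) := by
    intro N _ φ i j
    have := hMMrel i j
    calc (∑ᶠ x : ↥(X i), φ (b ⟨i, x⟩)) = φ (∑ᶠ x : ↥(X i), b ⟨i, x⟩) :=
          (φ.map_finsum (Set.toFinite _)).symm
      _ = φ (∑ᶠ y : ↥(X j), b ⟨j, y⟩) := by rw [this]
      _ = ∑ᶠ y : ↥(X j), φ (b ⟨j, y⟩) := φ.map_finsum (Set.toFinite _)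
  -- commutativity of the square
  have hcomm : μ.comp η = η'.comp ψ := by
    obtain ⟨φ, -, huniq⟩ := hMM MEV (fun p => μ (η (b p))) (mrel_comp (μ.comp η))
    have e1 : μ.comp η = φ := huniq _ (fun p => rfl)
    have e2 : η'.comp ψ = φ := huniq _ (fun p => (comm_gen p.1 p.2).symm)
    rw [e1, e2]
  refine ⟨hcomm, ?_⟩
  intro P _ p q hpq
  -- define the candidate map on generators of MEV
  set c : (G.V ⊕ (∀ i, ↥(X i))) → P := fun z =>
    Sum.rec (fun w => p (aE w)) (fun t => q (aF t)) z with hc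
  have hcrel : MultiRel G X c := by
    constructor
    · intro w Y hY
      show p (aE w) = ∑ᶠ e ∈ Y, p (aE (G.s e))
      rw [hMEC.1 w Y hY, AddMonoidHom.map_finsum_mem _ _ (hG.finite_mem w Y hY)]
    · intro i x
      have h1 : c (Sum.inl (G.s x.1)) = p (η (b ⟨i, x⟩)) := by
        simp [hc, hη]
      have h2 : p (η (b ⟨i, x⟩)) = q (ψ (b ⟨i, x⟩)) := by
        have := congrArg (fun f : MM →+ P => f (b ⟨i, x⟩)) hpq
        simpa using this
      rw [h1, h2, hψ, AddMonoidHom.map_finsum_mem _ _ (Set.toFinite _)]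
  obtain ⟨θ, hθ, hθuniq⟩ := hMEV P c hcrel
  refine ⟨θ, ⟨?_, ?_⟩, ?_⟩
  · -- θ ∘ μ = p
    have hrelP : G.Rel (fun w => p (aE w)) := by
      intro w Y hY
      show p (aE w) = ∑ᶠ e ∈ Y, p (aE (G.s e))
      rw [hMEC.1 w Y hY, AddMonoidHom.map_finsum_mem _ _ (hG.finite_mem w Y hY)]
    obtain ⟨φ, -, huniq⟩ := hMEC.2 P (fun w => p (aE w)) hrelP
    have e1 : θ.comp μ = φ := huniq _ (fun w => by
      simp [AddMonoidHom.comp_apply, hμ, hθ (Sum.inl w), hc])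
    have e2 : p = φ := huniq _ (fun w => rfl)
    rw [e1, e2]
  · -- θ ∘ η' = q
    obtain ⟨φ, -, huniq⟩ := hF P (fun t => q (aF t))
    have e1 : θ.comp η' = φ := huniq _ (fun t => by
      simp [AddMonoidHom.comp_apply, hη', hθ (Sum.inr t), hc])
    have e2 : q = φ := huniq _ (fun t => rfl)
    rw [e1, e2]
  · -- uniqueness
    intro θ' ⟨hθ'1, hθ'2⟩
    apply hθuniq
    intro z
    cases z with
    | inl w =>
      have : θ' (μ (aE w)) = p (aE w) := by
        rw [← AddMonoidHom.comp_apply, hθ'1]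
      simpa [hμ, hc] using this
    | inr t =>
      have : θ' (η' (aF t)) = q (aF t) := by
        rw [← AddMonoidHom.comp_apply, hθ'2]
      simpa [hη', hc] using this
end

section
/- Let (E,C) be a finite bipartite separated graph and (E₁,C¹) its associated finite bipartite separated graph. Identify ℤ^(C¹) with ℤ^(E¹) via δ_{X(x)} ↔ δ_x, and identify ℤ^(E₁⁰) with ℤ^(E^{0,1}) ⊕ ℤ^(E₁^{0,1}). Under these identifications, ker(1_{C¹} − A_{(E₁,C¹)}) equals {z ∈ Z₁ : s_*(z) = 0}, i.e., the kernel of the restriction of s_* to Z₁. -/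
/-- A bipartite separated graph, with the classes of `C_u` enumerated as
`X u 0, …, X u (k u − 1)` for every `u ∈ E^{0,0}`. -/
structure BipGraphIdx where
  V0 : Type
  V1 : Type
  E : Type
  s : E → V1
  r : E → V0
  k : V0 → ℕ
  X : (u : V0) → Fin (k u) → Set E

/-- `(E,C)` is a finite bipartite separated graph. -/
structure BipGraphIdx.Valid (G : BipGraphIdx) : Prop where
  finV0 : Finite G.V0
  finV1 : Finite G.V1
  finE : Finite G.E
  mem_r : ∀ u i, ∀ e ∈ G.X u i, G.r e = u
  nonempty : ∀ u i, (G.X u i).Nonempty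
  disj : ∀ u, ∀ i j : Fin (G.k u), i ≠ j → Disjoint (G.X u i) (G.X u j)
  inj : ∀ u, Function.Injective (G.X u)
  cover : ∀ e : G.E, ∃ i, e ∈ G.X (G.r e) i
  kpos : ∀ u, 0 < G.k u
  s_surj : Function.Surjective G.s

-- The element `γᵢᵘ = Σ_{x∈X₁ᵘ} δ_x − Σ_{y∈Xᵢᵘ} δ_y ∈ ℤ^(E¹)`.
open Classical in
noncomputable def gammaB (G : BipGraphIdx) (hk : ∀ u, 0 < G.k u) (u : G.V0)
    (i : Fin (G.k u)) : G.E → ℤ :=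
  fun e => (if e ∈ G.X u ⟨0, hk u⟩ then 1 else 0) - (if e ∈ G.X u i then 1 else 0)

/-- The subgroup `Z₁ ⊆ ℤ^(E¹)` generated by the `γᵢᵘ`, `2 ≤ i ≤ k_u`, `u ∈ E^{0,0}`. -/
noncomputable def Z1 (G : BipGraphIdx) (hk : ∀ u, 0 < G.k u) : Submodule ℤ (G.E → ℤ) :=
  Submodule.span ℤ
    {z : G.E → ℤ | ∃ u i, i ≠ (⟨0, hk u⟩ : Fin (G.k u)) ∧ z = gammaB G hk u i}

/-- Lemma 5.5: under the identification `ℤ^(C¹) = ℤ^(E¹)` via `δ_{X(x)} ↔ δ_x` and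
`ℤ^(E₁⁰) = ℤ^(E^{0,1}) ⊕ ℤ^(E₁^{0,1})` (new vertices being tuples `v(x₁,…,x_{k_u})`),
the kernel of `1_{C¹} − A_{(E₁,C¹)}` equals `{z ∈ Z₁ : s_*(z) = 0}`. -/
theorem stmt7 (G : BipGraphIdx) (hG : G.Valid)
    (oneC1 A1 : (G.E → ℤ) →ₗ[ℤ]
      ((G.V1 → ℤ) × ((Σ u : G.V0, ∀ i, ↥(G.X u i)) → ℤ)))
    (h1 : ∀ (u : G.V0) (i : Fin (G.k u)) (x : ↥(G.X u i)),
      oneC1 (deltaFn (x : G.E)) = (deltaFn (G.s x.1), 0))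
    (hA : ∀ (u : G.V0) (i : Fin (G.k u)) (x : ↥(G.X u i)),
      A1 (deltaFn (x : G.E)) =
        (0, ∑ᶠ t ∈ {t : ∀ j, ↥(G.X u j) | t i = x},
          deltaFn (⟨u, t⟩ : Σ u : G.V0, ∀ i, ↥(G.X u i))))
    (sstar : (G.E → ℤ) →ₗ[ℤ] (G.V1 → ℤ))
    (hs : ∀ x : G.E, sstar (deltaFn x) = deltaFn (G.s x)) :
    LinearMap.ker (oneC1 - A1) = Z1 G hG.kpos ⊓ LinearMap.ker sstar := by
  classical
  have finE := hG.finE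
  have finV0 := hG.finV0
  haveI : Fintype G.E := Fintype.ofFinite _
  haveI : Fintype G.V0 := Fintype.ofFinite _
  -- choose the unique class index of each edge
  choose ie hie using hG.cover
  have huniq : ∀ (u : G.V0) (i j : Fin (G.k u)) (e : G.E),
      e ∈ G.X u i → e ∈ G.X u j → i = j := by
    intro u i j e hi hj
    by_contra h
    exact Set.disjoint_left.mp (hG.disj u i j h) hi hj
  have hmem : ∀ (e : G.E) (i : Fin (G.k (G.r e))), e ∈ G.X (G.r e) i ↔ i = ie e :=
    fun e i => ⟨fun h => huniq _ _ _ _ h (hie e), fun h => h ▸ hie e⟩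
  have hnotmem : ∀ (e : G.E) (u : G.V0) (i : Fin (G.k u)), u ≠ G.r e → e ∉ G.X u i :=
    fun e u i hne h => hne (hG.mem_r u i e h).symm
  have h1' : ∀ e : G.E, oneC1 (deltaFn e) = (deltaFn (G.s e), 0) :=
    fun e => h1 (G.r e) (ie e) ⟨e, hie e⟩
  have hA' : ∀ e : G.E, A1 (deltaFn e) =
      (0, ∑ᶠ t ∈ {t : ∀ j, ↥(G.X (G.r e) j) | t (ie e) = ⟨e, hie e⟩},
        deltaFn (⟨G.r e, t⟩ : Σ u : G.V0, ∀ i, ↥(G.X u i))) :=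
    fun e => hA (G.r e) (ie e) ⟨e, hie e⟩
  -- decomposition in the canonical basis
  have hz : ∀ z : G.E → ℤ, z = ∑ e, z e • deltaFn e := by
    intro z
    funext p
    rw [Finset.sum_apply]
    simp only [Pi.smul_apply, deltaFn, smul_eq_mul, mul_ite, mul_one, mul_zero]
    rw [Finset.sum_ite_eq Finset.univ p z]
    simp
  have expand : ∀ (M : Type) [AddCommGroup M] [Module ℤ M]
      (F : (G.E → ℤ) →ₗ[ℤ] M) (z : G.E → ℤ), F z = ∑ e, F (z e • deltaFn e) := by
    intro M _ _ F z
    conv_lhs => rw [hz z]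
    rw [map_sum]
  have hone : ∀ z, oneC1 z = (sstar z, 0) := by
    intro z
    rw [expand _ oneC1 z, expand _ sstar z]
    simp only [map_smul, h1', hs]
    refine Prod.ext ?_ ?_
    · rw [Prod.fst_sum]
      simp
    · rw [Prod.snd_sum]
      simp
  have hAfst : ∀ z, (A1 z).1 = 0 := by
    intro z
    rw [expand _ A1 z, Prod.fst_sum]
    simp only [map_smul, hA']
    simp
  -- the key computation of the second component of A1
  have key : ∀ (e : G.E) (u : G.V0) (t : ∀ i, ↥(G.X u i)),
      (A1 (deltaFn e)).2 ⟨u, t⟩ = ∑ i, (deltaFn e) ((t i : G.E)) := by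
    intro e u t
    rw [hA' e]
    rw [show ((0 : G.V1 → ℤ), ∑ᶠ t ∈ {t : ∀ j, ↥(G.X (G.r e) j) | t (ie e) = ⟨e, hie e⟩},
        deltaFn (⟨G.r e, t⟩ : Σ u : G.V0, ∀ i, ↥(G.X u i))).2
      = ∑ᶠ t ∈ {t : ∀ j, ↥(G.X (G.r e) j) | t (ie e) = ⟨e, hie e⟩},
        deltaFn (⟨G.r e, t⟩ : Σ u : G.V0, ∀ i, ↥(G.X u i)) from rfl]
    rw [finsum_mem_eq_finite_toFinset_sum _ (Set.toFinite _), Finset.sum_apply]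
    by_cases hu : u = G.r e
    · subst hu
      have lhsterm : ∀ t' : ∀ j, ↥(G.X (G.r e) j),
          deltaFn (⟨G.r e, t'⟩ : Σ v : G.V0, ∀ i, ↥(G.X v i)) ⟨G.r e, t⟩
            = if t = t' then (1 : ℤ) else 0 := by
        intro t'
        by_cases h : t = t'
        · subst h
          simp [deltaFn]
        · have hne : (⟨G.r e, t⟩ : Σ v : G.V0, ∀ i, ↥(G.X v i)) ≠ ⟨G.r e, t'⟩ := by
            intro hc
            exact h (eq_of_heq (Sigma.mk.inj_iff.1 hc).2)
          simp [deltaFn, hne, h]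
      rw [Finset.sum_congr rfl fun t' _ => lhsterm t', Finset.sum_ite_eq]
      have rhs : ∑ i, deltaFn e ((t i : G.E)) = if (t (ie e) : G.E) = e then (1:ℤ) else 0 := by
        have rhsterm : ∀ i : Fin (G.k (G.r e)), deltaFn e ((t i : G.E))
            = if i = ie e then (if (t (ie e) : G.E) = e then (1 : ℤ) else 0) else 0 := by
          intro i
          by_cases hi : i = ie e
          · rw [hi, if_pos rfl]
            simp [deltaFn]
          · have hne : (t i : G.E) ≠ e := fun h =>
              hi (huniq (G.r e) i (ie e) e (by have h2 := (t i).2; rw [h] at h2; exact h2) (hie e))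
            simp [deltaFn, hne, hi]
        rw [Finset.sum_congr rfl fun i _ => rhsterm i, Finset.sum_ite_eq' Finset.univ]
        simp
      rw [rhs]
      have hmemiff : (t ∈ (Set.toFinite
          {t' : ∀ j, ↥(G.X (G.r e) j) | t' (ie e) = ⟨e, hie e⟩}).toFinset)
          ↔ ((t (ie e) : G.E) = e) := by
        rw [Set.Finite.mem_toFinset, Set.mem_setOf_eq, Subtype.ext_iff]
      rw [if_congr hmemiff rfl rfl]
    · have lhs0 : ∀ t' : ∀ j, ↥(G.X (G.r e) j),
          deltaFn (⟨G.r e, t'⟩ : Σ v : G.V0, ∀ i, ↥(G.X v i)) ⟨u, t⟩ = 0 := by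
        intro t'
        have hne : (⟨u, t⟩ : Σ v : G.V0, ∀ i, ↥(G.X v i)) ≠ ⟨G.r e, t'⟩ := by
          intro hc
          exact hu (congrArg Sigma.fst hc)
        simp [deltaFn, hne]
      have rhs0 : ∀ i : Fin (G.k u), (deltaFn e) ((t i : G.E)) = 0 := by
        intro i
        have hne : (t i : G.E) ≠ e := fun h => hnotmem e u i hu (h ▸ (t i).2)
        simp [deltaFn, hne]
      simp only [lhs0, rhs0, Finset.sum_const_zero]
  have hA2 : ∀ (z : G.E → ℤ) (u : G.V0) (t : ∀ i, ↥(G.X u i)),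
      (A1 z).2 ⟨u, t⟩ = ∑ i, z ((t i : G.E)) := by
    intro z u t
    rw [expand _ A1 z]
    simp only [map_smul]
    rw [Prod.snd_sum, Finset.sum_apply]
    have hterm : ∀ e : G.E, (z e • (A1 (deltaFn e)).2) ⟨u, t⟩
        = ∑ i, z e * (deltaFn e) ((t i : G.E)) := by
      intro e
      rw [Pi.smul_apply, key e u t, smul_eq_mul, Finset.mul_sum]
    have hsmul : ∀ e : G.E, (z e • A1 (deltaFn e)).2 ⟨u, t⟩
        = ∑ i, z e * (deltaFn e) ((t i : G.E)) := by
      intro e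
      rw [show (z e • A1 (deltaFn e)).2 = z e • (A1 (deltaFn e)).2 from rfl]
      exact hterm e
    rw [Finset.sum_congr rfl fun e _ => hsmul e, Finset.sum_comm]
    apply Finset.sum_congr rfl
    intro i _
    simp only [deltaFn, mul_ite, mul_one, mul_zero]
    rw [Finset.sum_ite_eq Finset.univ]
    simp
  -- membership in the kernel, concretely
  have hker : ∀ z : G.E → ℤ, (oneC1 - A1) z = 0 ↔
      sstar z = 0 ∧ ∀ (u : G.V0) (t : ∀ i, ↥(G.X u i)), ∑ i, z ((t i : G.E)) = 0 := by
    intro z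
    rw [LinearMap.sub_apply, sub_eq_zero, hone z]
    rw [Prod.ext_iff]
    constructor
    · rintro ⟨hfst, hsnd⟩
      rw [hAfst] at hfst
      refine ⟨hfst, ?_⟩
      intro u t
      rw [← hA2 z u t, ← hsnd]
      rfl
    · rintro ⟨hfst, hsnd⟩
      refine ⟨by show sstar z = (A1 z).1; rw [hfst, hAfst], ?_⟩
      funext p
      obtain ⟨u, t⟩ := p
      rw [show ((sstar z, (0 : (Σ u : G.V0, ∀ i, ↥(G.X u i)) → ℤ)) :
        (G.V1 → ℤ) × ((Σ u : G.V0, ∀ i, ↥(G.X u i)) → ℤ)).2 ⟨u, t⟩ = 0 from rfl]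
      rw [hA2 z u t, hsnd u t]
  -- the tuple condition characterizes Z1
  have t0 : ∀ (u : G.V0) (j : Fin (G.k u)), ↥(G.X u j) :=
    fun u j => ⟨(hG.nonempty u j).choose, (hG.nonempty u j).choose_spec⟩
  have hZ1 : ∀ z : G.E → ℤ,
      (∀ (u : G.V0) (t : ∀ i, ↥(G.X u i)), ∑ i, z ((t i : G.E)) = 0) ↔
        z ∈ Z1 G hG.kpos := by
    intro z
    constructor
    · -- build z as a combination of gammas
      intro hP
      have hconst : ∀ (u : G.V0) (i : Fin (G.k u)) (e e' : G.E),
          e ∈ G.X u i → e' ∈ G.X u i → z e = z e' := by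
        intro u i e e' he he'
        have h1 := hP u (Function.update (t0 u) i ⟨e, he⟩)
        have h2 := hP u (Function.update (t0 u) i ⟨e', he'⟩)
        have h3 : (∑ j, z ((Function.update (t0 u) i ⟨e, he⟩ j : G.E)))
            - (∑ j, z ((Function.update (t0 u) i ⟨e', he'⟩ j : G.E))) = z e - z e' := by
          rw [← Finset.sum_sub_distrib]
          rw [Finset.sum_eq_single i]
          · simp
          · intro j _ hj
            rw [Function.update_of_ne hj, Function.update_of_ne hj, sub_self]
          · simp
        rw [h1, h2, sub_self] at h3
        linarith [h3]
      have hsum0 : ∀ u : G.V0, ∑ i, z ((t0 u i : G.E)) = 0 := fun u => hP u (t0 u)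
      have hrep : z = ∑ u : G.V0, ∑ i ∈ Finset.univ.erase (⟨0, hG.kpos u⟩ : Fin (G.k u)),
          (-(z ((t0 u i : G.E)))) • gammaB G hG.kpos u i := by
        funext e
        rw [Finset.sum_apply]
        simp only [Finset.sum_apply, Pi.smul_apply, smul_eq_mul]
        rw [Finset.sum_eq_single (G.r e)]
        · by_cases h0 : ie e = (⟨0, hG.kpos (G.r e)⟩ : Fin (G.k (G.r e)))
          · have hgam : ∀ i ∈ Finset.univ.erase (⟨0, hG.kpos (G.r e)⟩ : Fin (G.k (G.r e))),
                gammaB G hG.kpos (G.r e) i e = 1 := by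
              intro i hi
              have hi' := Finset.ne_of_mem_erase hi
              simp only [gammaB]
              rw [if_pos (h0 ▸ hie e), if_neg (fun h => hi' ((hmem e i).1 h ▸ h0))]
              ring
            rw [Finset.sum_congr rfl fun i hi => by rw [hgam i hi, mul_one]]
            have hsum := hsum0 (G.r e)
            rw [← Finset.add_sum_erase _ _ (Finset.mem_univ (⟨0, hG.kpos (G.r e)⟩ :
              Fin (G.k (G.r e))))] at hsum
            have he0 : z e = z ((t0 (G.r e) (⟨0, hG.kpos (G.r e)⟩ : Fin (G.k (G.r e))) : G.E)) :=
              hconst (G.r e) _ e _ (h0 ▸ hie e) (t0 (G.r e) _).2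
            rw [Finset.sum_neg_distrib]
            linarith [hsum, he0]
          · rw [Finset.sum_eq_single (ie e)]
            · have hg : gammaB G hG.kpos (G.r e) (ie e) e = -1 := by
                simp only [gammaB]
                rw [if_neg (fun h => h0 ((hmem e _).1 h).symm), if_pos (hie e)]
                ring
              rw [hg]
              have hc := hconst (G.r e) (ie e) e ((t0 (G.r e) (ie e) : G.E)) (hie e)
                (t0 (G.r e) (ie e)).2
              linarith [hc]
            · intro j hj hji
              have hg : gammaB G hG.kpos (G.r e) j e = 0 := by
                simp only [gammaB]
                rw [if_neg (fun h => h0 ((hmem e _).1 h).symm),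
                  if_neg (fun h => hji ((hmem e j).1 h))]
                ring
              rw [hg, mul_zero]
            · intro h
              exact absurd (Finset.mem_erase.2 ⟨h0, Finset.mem_univ _⟩) h
        · intro u _ hu
          have hg : ∀ i ∈ Finset.univ.erase (⟨0, hG.kpos u⟩ : Fin (G.k u)),
              gammaB G hG.kpos u i e = 0 := by
            intro i _
            simp only [gammaB]
            rw [if_neg (hnotmem e u _ hu), if_neg (hnotmem e u _ hu)]
            ring
          rw [Finset.sum_congr rfl fun i hi => by rw [hg i hi, mul_zero]]
          exact Finset.sum_const_zero
        · simp
      rw [hrep]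
      apply Submodule.sum_mem
      intro u _
      apply Submodule.sum_mem
      intro i hi
      apply Submodule.smul_mem
      exact Submodule.subset_span ⟨u, i, Finset.ne_of_mem_erase hi, rfl⟩
    · -- elements of Z1 satisfy the tuple condition
      intro hzmem u t
      induction hzmem using Submodule.span_induction with
      | mem w hw =>
        obtain ⟨u', i', hi', rfl⟩ := hw
        by_cases hu : u = u'
        · subst hu
          have hterm : ∀ i : Fin (G.k u), gammaB G hG.kpos u i' ((t i : G.E))
              = (if i = (⟨0, hG.kpos u⟩ : Fin (G.k u)) then (1:ℤ) else 0)
                - (if i = i' then (1:ℤ) else 0) := by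
            intro i
            simp only [gammaB]
            congr 1
            · by_cases h : i = (⟨0, hG.kpos u⟩ : Fin (G.k u))
              · rw [if_pos (h ▸ (t i).2), if_pos h]
              · rw [if_neg (fun hm => h (huniq u i _ _ (t i).2 hm)), if_neg h]
            · by_cases h : i = i'
              · rw [if_pos (h ▸ (t i).2), if_pos h]
              · rw [if_neg (fun hm => h (huniq u i i' _ (t i).2 hm)), if_neg h]
          rw [Finset.sum_congr rfl fun i _ => hterm i, Finset.sum_sub_distrib]
          rw [Finset.sum_ite_eq' Finset.univ, Finset.sum_ite_eq' Finset.univ]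
          simp
        · have hterm : ∀ i : Fin (G.k u), gammaB G hG.kpos u' i' ((t i : G.E)) = 0 := by
            intro i
            have hru : u' ≠ G.r ((t i : G.E)) := by
              rw [hG.mem_r u i _ (t i).2]
              exact fun h => hu h.symm
            simp only [gammaB]
            rw [if_neg (hnotmem _ u' _ hru), if_neg (hnotmem _ u' _ hru)]
            ring
          rw [Finset.sum_congr rfl fun i _ => hterm i]
          exact Finset.sum_const_zero
      | zero => simp
      | add w₁ w₂ _ _ ih₁ ih₂ =>
        rw [Finset.sum_congr rfl fun i _ => (by rfl : (w₁ + w₂) ((t i : G.E))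
          = w₁ ((t i : G.E)) + w₂ ((t i : G.E))), Finset.sum_add_distrib, ih₁, ih₂, add_zero]
      | smul c w _ ih =>
        rw [Finset.sum_congr rfl fun i _ => (by simp : (c • w) ((t i : G.E))
          = c * w ((t i : G.E))), ← Finset.mul_sum, ih, mul_zero]
  -- conclude
  ext z
  rw [LinearMap.mem_ker, hker z, Submodule.mem_inf, LinearMap.mem_ker, ← hZ1 z, and_comm]
end

section
/- Let (E,C) be a finite bipartite separated graph. The assignment Φ(Σ_{u∈E^{0,0}} Σ_{i=1}^{k_u} nᵢᵘ δ_{Xᵢᵘ}) = Σ_{u∈E^{0,0}} Σ_{i=2}^{k_u} nᵢᵘ γᵢᵘ defines a well-defined group isomorphism Φ from ker(1_C − A_{(E,C)}) onto {z ∈ Z₁ : s_*(z) = 0}, whose inverse Υ sends Σ_{u} Σ_{i=2}^{k_u} nᵢᵘ γᵢᵘ to Σ_{u} Σ_{i=1}^{k_u} nᵢᵘ δ_{Xᵢᵘ}, where n₁ᵘ := −Σ_{i=2}^{k_u} nᵢᵘ. -/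
/-!
Send each edge `e` to its class `cls e ∈ C_{r(e)}` and pull functions on `C` back to `E¹` along
`cls` (`LinearMap.funLeft`); call this pullback `π`. As the classes are nonempty and partition
`E¹`, `π` is injective, and `γᵢᵘ = π (δ_{X₁ᵘ} − δ_{Xᵢᵘ})`. Moreover `1_C` sums over the fibers
`C_u` and `A_{(E,C)} = s_* ∘ π`, so `ker(1_C − A_{(E,C)})` consists of the `z` with vanishing fiber
sums and `s_*(π z) = 0`; on such `z`, `Φ z = −π z`. Hence `Φ` is injective on the kernel, and
since `Z₁` lies in the `π`-image of the fiber-sum-zero vectors, each `w = π f` there is `Φ (−f)`.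
-/

theorem deltaFn_eq_single {α : Type} [DecidableEq α] (q : α) : deltaFn q = Pi.single q 1 := by
  funext p
  simp [deltaFn, Pi.single_apply]

theorem LinearMap.apply_eq_sum_deltaFn {α M : Type} [Fintype α] [AddCommGroup M]
    (f : (α → ℤ) →ₗ[ℤ] M) (z : α → ℤ) : f z = ∑ p, z p • f (deltaFn p) := by
  classical
  conv_lhs => rw [← Finset.univ_sum_single z]
  rw [map_sum]
  refine Finset.sum_congr rfl fun p _ => ?_
  rw [deltaFn_eq_single, ← map_smul, ← Pi.single_smul, smul_eq_mul, mul_one]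

theorem LinearMap.ext_deltaFn {α M : Type} [Finite α] [AddCommGroup M]
    {f g : (α → ℤ) →ₗ[ℤ] M} (h : ∀ p, f (deltaFn p) = g (deltaFn p)) : f = g := by
  classical
  exact LinearMap.pi_ext' fun p => LinearMap.ext_ring (by simpa [deltaFn_eq_single] using h p)

theorem Finset.sum_eq_zero_of_apply_eq_neg_sum_filter_ne {ι : Type} [Fintype ι] [DecidableEq ι]
    (f : ι → ℤ) {a : ι} (h : f a = -∑ i ∈ Finset.univ.filter (fun i => i ≠ a), f i) :
    ∑ i, f i = 0 := by
  rw [← Finset.add_sum_erase _ f (Finset.mem_univ a), ← Finset.filter_ne', h, neg_add_cancel]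

def sigmaFiberSum {α : Type} (β : α → Type) [∀ a, Fintype (β a)] :
    ((Σ a, β a) → ℤ) →ₗ[ℤ] (α → ℤ) where
  toFun z a := ∑ b, z ⟨a, b⟩
  map_add' _ _ := funext fun _ => Finset.sum_add_distrib
  map_smul' _ _ := funext fun _ => (Finset.mul_sum ..).symm

section sigmaFiberSum

variable {α : Type} {β : α → Type} [∀ a, Fintype (β a)]

theorem sigmaFiberSum_deltaFn (p : Σ a, β a) : sigmaFiberSum β (deltaFn p) = deltaFn p.1 := by
  obtain ⟨a, b⟩ := p
  funext a'
  by_cases ha : a' = a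
  · subst ha
    simp only [sigmaFiberSum, LinearMap.coe_mk, AddHom.coe_mk, deltaFn]
    rw [Finset.sum_eq_single b (fun x _ hx => if_neg fun h => hx (sigma_mk_injective h))
      (by simp), if_pos rfl, if_pos trivial]
  · simp [sigmaFiberSum, deltaFn, ha]

theorem sum_smul_fst_eq_sum_sigmaFiberSum_smul [Fintype α] {M : Type} [AddCommGroup M]
    (z : (Σ a, β a) → ℤ) (f : α → M) :
    ∑ p, z p • f p.1 = ∑ a, sigmaFiberSum β z a • f a := by
  rw [Fintype.sum_sigma]
  simp [sigmaFiberSum, Finset.sum_smul]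

end sigmaFiberSum

namespace BipGraphIdx

section gammaB

variable (G : BipGraphIdx) (hk : ∀ u, 0 < G.k u)

theorem gammaB_zero (u : G.V0) : gammaB G hk u ⟨0, hk u⟩ = 0 := by
  funext e
  simp [gammaB]

theorem ite_eq_gammaB (u : G.V0) (i : Fin (G.k u)) :
    (if i = ⟨0, hk u⟩ then 0 else gammaB G hk u i) = gammaB G hk u i := by
  split_ifs with hi
  · rw [hi, gammaB_zero]
  · rfl

theorem gammaB_mem_Z1 (u : G.V0) (i : Fin (G.k u)) : gammaB G hk u i ∈ Z1 G hk := by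
  by_cases hi : i = ⟨0, hk u⟩
  · rw [hi, gammaB_zero]
    exact zero_mem _
  · exact Submodule.subset_span ⟨u, i, hi, rfl⟩

variable {G hk} (Φ : ((Σ u, Fin (G.k u)) → ℤ) →ₗ[ℤ] (G.E → ℤ))

theorem apply_mem_Z1 [Finite G.V0]
    (hΦ : ∀ p : Σ u, Fin (G.k u), Φ (deltaFn p) = gammaB G hk p.1 p.2)
    (z : (Σ u, Fin (G.k u)) → ℤ) : Φ z ∈ Z1 G hk := by
  cases nonempty_fintype G.V0
  rw [Φ.apply_eq_sum_deltaFn]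
  exact Submodule.sum_mem _ fun p _ => Submodule.smul_mem _ _ (hΦ p ▸ gammaB_mem_Z1 G hk _ _)

theorem apply_eq_finsum_sum_smul_gammaB [Finite G.V0]
    (hΦ : ∀ p : Σ u, Fin (G.k u), Φ (deltaFn p) = gammaB G hk p.1 p.2)
    (n : (u : G.V0) → Fin (G.k u) → ℤ) :
    Φ (fun p => n p.1 p.2) =
      ∑ᶠ u, ∑ i ∈ Finset.univ.filter (fun i => i ≠ ⟨0, hk u⟩), n u i • gammaB G hk u i := by
  cases nonempty_fintype G.V0
  rw [finsum_eq_sum_of_fintype, Φ.apply_eq_sum_deltaFn, Fintype.sum_sigma]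
  refine Finset.sum_congr rfl fun u _ => ?_
  refine Eq.trans ?_ (Finset.sum_filter_of_ne (f := fun i => n u i • gammaB G hk u i)
    (p := fun i => i ≠ ⟨0, hk u⟩) fun i _ hne hi => hne (by rw [hi, gammaB_zero, smul_zero])).symm
  simp only [hΦ]

end gammaB

theorem eq_inl_comp_sigmaFiberSum {G : BipGraphIdx} [Finite G.V0]
    (oneC : ((Σ u, Fin (G.k u)) → ℤ) →ₗ[ℤ] ((G.V0 → ℤ) × (G.V1 → ℤ)))
    (h1 : ∀ p : Σ u, Fin (G.k u), oneC (deltaFn p) = (deltaFn p.1, 0)) :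
    oneC = LinearMap.inl ℤ _ _ ∘ₗ sigmaFiberSum _ :=
  LinearMap.ext_deltaFn fun p => by simp [h1, sigmaFiberSum_deltaFn]

namespace Valid

variable {G : BipGraphIdx} (hG : G.Valid)

noncomputable def cls (e : G.E) : Σ u, Fin (G.k u) := ⟨G.r e, (hG.cover e).choose⟩

theorem mem_X_iff_cls_eq {e : G.E} {u : G.V0} {i : Fin (G.k u)} :
    e ∈ G.X u i ↔ hG.cls e = ⟨u, i⟩ := by
  have he := (hG.cover e).choose_spec
  constructor
  · intro h
    obtain rfl := hG.mem_r u i e h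
    by_contra hne
    refine Set.disjoint_left.mp (hG.disj _ _ _ fun hij => hne ?_) he h
    simp [cls, hij]
  · intro h
    obtain ⟨rfl, hi⟩ := Sigma.mk.inj_iff.mp h
    simpa [← eq_of_heq hi] using he

theorem cls_surjective : Function.Surjective hG.cls := fun ⟨u, i⟩ =>
  let ⟨e, he⟩ := hG.nonempty u i
  ⟨e, hG.mem_X_iff_cls_eq.mp he⟩

theorem gammaB_eq_funLeft (u : G.V0) (i : Fin (G.k u)) :
    gammaB G hG.kpos u i =
      LinearMap.funLeft ℤ ℤ hG.cls (deltaFn ⟨u, ⟨0, hG.kpos u⟩⟩ - deltaFn ⟨u, i⟩) := by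
  funext e
  simp only [gammaB, deltaFn, LinearMap.funLeft_apply, Pi.sub_apply]
  congr <;> exact propext hG.mem_X_iff_cls_eq

theorem sstar_deltaFn_comp_cls (sstar : (G.E → ℤ) →ₗ[ℤ] (G.V1 → ℤ))
    (hs : ∀ x, sstar (deltaFn x) = deltaFn (G.s x)) (p : Σ u, Fin (G.k u)) :
    sstar (deltaFn p ∘ hG.cls) = ∑ᶠ x ∈ G.X p.1 p.2, deltaFn (G.s x) := by
  classical
  have := hG.finE
  cases nonempty_fintype G.E
  obtain ⟨u, i⟩ := p
  rw [sstar.apply_eq_sum_deltaFn, finsum_mem_def, finsum_eq_sum_of_fintype]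
  refine Finset.sum_congr rfl fun e _ => ?_
  simp [hs, Set.indicator_apply, hG.mem_X_iff_cls_eq, deltaFn, ite_smul]

theorem eq_inr_comp_funLeft_cls
    (Amap : ((Σ u, Fin (G.k u)) → ℤ) →ₗ[ℤ] ((G.V0 → ℤ) × (G.V1 → ℤ)))
    (hA : ∀ p : Σ u, Fin (G.k u),
      Amap (deltaFn p) = (0, ∑ᶠ x ∈ G.X p.1 p.2, deltaFn (G.s x)))
    (sstar : (G.E → ℤ) →ₗ[ℤ] (G.V1 → ℤ)) (hs : ∀ x, sstar (deltaFn x) = deltaFn (G.s x)) :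
    Amap = LinearMap.inr ℤ _ _ ∘ₗ sstar ∘ₗ LinearMap.funLeft ℤ ℤ hG.cls := by
  have := hG.finV0
  refine LinearMap.ext_deltaFn fun p => ?_
  rw [hA, ← hG.sstar_deltaFn_comp_cls sstar hs]
  rfl

theorem mem_ker_sub_iff
    (oneC Amap : ((Σ u, Fin (G.k u)) → ℤ) →ₗ[ℤ] ((G.V0 → ℤ) × (G.V1 → ℤ)))
    (h1 : ∀ p : Σ u, Fin (G.k u), oneC (deltaFn p) = (deltaFn p.1, 0))
    (hA : ∀ p : Σ u, Fin (G.k u),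
      Amap (deltaFn p) = (0, ∑ᶠ x ∈ G.X p.1 p.2, deltaFn (G.s x)))
    (sstar : (G.E → ℤ) →ₗ[ℤ] (G.V1 → ℤ)) (hs : ∀ x, sstar (deltaFn x) = deltaFn (G.s x))
    (z : (Σ u, Fin (G.k u)) → ℤ) :
    z ∈ LinearMap.ker (oneC - Amap) ↔
      sigmaFiberSum _ z = 0 ∧ sstar (LinearMap.funLeft ℤ ℤ hG.cls z) = 0 := by
  have := hG.finV0
  rw [eq_inl_comp_sigmaFiberSum oneC h1, hG.eq_inr_comp_funLeft_cls Amap hA sstar hs]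
  simp [Prod.ext_iff]

theorem Z1_le_map_ker_sigmaFiberSum :
    Z1 G hG.kpos ≤ (LinearMap.ker (sigmaFiberSum _)).map (LinearMap.funLeft ℤ ℤ hG.cls) := by
  refine Submodule.span_le.mpr ?_
  rintro _ ⟨u, i, -, rfl⟩
  refine ⟨_, ?_, (hG.gammaB_eq_funLeft u i).symm⟩
  simp [sigmaFiberSum_deltaFn]

-- The `δ_{X₁ᵘ}` parts of `Φ z = Σ z_p γ_p` add up to the fiber sums of `z`, which vanish.
theorem apply_eq_neg_funLeft_of_sigmaFiberSum_eq_zero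
    (Φ : ((Σ u, Fin (G.k u)) → ℤ) →ₗ[ℤ] (G.E → ℤ))
    (hΦ : ∀ p : Σ u, Fin (G.k u), Φ (deltaFn p) = gammaB G hG.kpos p.1 p.2)
    (z : (Σ u, Fin (G.k u)) → ℤ) (hz : sigmaFiberSum _ z = 0) :
    Φ z = -LinearMap.funLeft ℤ ℤ hG.cls z := by
  have := hG.finV0
  cases nonempty_fintype G.V0
  set π := LinearMap.funLeft ℤ ℤ hG.cls
  have hfirst : ∑ p : Σ u, Fin (G.k u), z p • deltaFn (⟨p.1, ⟨0, hG.kpos p.1⟩⟩ : Σ u, Fin (G.k u))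
      = 0 := by
    refine (sum_smul_fst_eq_sum_sigmaFiberSum_smul z
      fun u => deltaFn (⟨u, ⟨0, hG.kpos u⟩⟩ : Σ u, Fin (G.k u))).trans ?_
    simp [hz]
  calc Φ z = ∑ p, z p • π (deltaFn ⟨p.1, ⟨0, hG.kpos p.1⟩⟩ - deltaFn p) := by
        rw [Φ.apply_eq_sum_deltaFn]
        simp only [hΦ, hG.gammaB_eq_funLeft, Sigma.eta]
        rfl
    _ = π (∑ p : Σ u, Fin (G.k u), z p • deltaFn ⟨p.1, ⟨0, hG.kpos p.1⟩⟩) - π z := by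
        simp only [map_sub, smul_sub, Finset.sum_sub_distrib, map_sum, map_smul,
          ← π.apply_eq_sum_deltaFn]
    _ = -π z := by rw [hfirst, map_zero, zero_sub]

end Valid

end BipGraphIdx

/-- Lemma 5.6: the assignment
`Φ(Σ_u Σ_i nᵢᵘ δ_{Xᵢᵘ}) = Σ_u Σ_{i≥2} nᵢᵘ γᵢᵘ` defines a well-defined group
isomorphism from `ker(1_C − A_{(E,C)})` onto `{z ∈ Z₁ : s_*(z) = 0}`, whose inverse
`Υ` sends `Σ_u Σ_{i≥2} nᵢᵘ γᵢᵘ` to `Σ_u Σ_i nᵢᵘ δ_{Xᵢᵘ}` where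
`n₁ᵘ := −Σ_{i≥2} nᵢᵘ`. -/
theorem stmt8 (G : BipGraphIdx) (hG : G.Valid)
    -- the maps 1_C and A_{(E,C)} : ℤ^(C) → ℤ^(E⁰) = ℤ^(E^{0,0}) ⊕ ℤ^(E^{0,1})
    (oneC Amap : ((Σ u : G.V0, Fin (G.k u)) → ℤ) →ₗ[ℤ] ((G.V0 → ℤ) × (G.V1 → ℤ)))
    (h1 : ∀ p : Σ u : G.V0, Fin (G.k u), oneC (deltaFn p) = (deltaFn p.1, 0))
    (hA : ∀ p : Σ u : G.V0, Fin (G.k u),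
      Amap (deltaFn p) = (0, ∑ᶠ x ∈ G.X p.1 p.2, deltaFn (G.s x)))
    (sstar : (G.E → ℤ) →ₗ[ℤ] (G.V1 → ℤ))
    (hs : ∀ x : G.E, sstar (deltaFn x) = deltaFn (G.s x))
    -- the map Φ, determined by Φ(δ_{X₁ᵘ}) = 0 and Φ(δ_{Xᵢᵘ}) = γᵢᵘ for i ≥ 2
    (Φ : ((Σ u : G.V0, Fin (G.k u)) → ℤ) →ₗ[ℤ] (G.E → ℤ))
    (hΦ : ∀ p : Σ u : G.V0, Fin (G.k u),
      Φ (deltaFn p) = if p.2 = (⟨0, hG.kpos p.1⟩ : Fin (G.k p.1)) then 0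
        else gammaB G hG.kpos p.1 p.2) :
    -- Φ is well defined into {z ∈ Z₁ : s_*(z) = 0}
    (∀ z ∈ LinearMap.ker (oneC - Amap), Φ z ∈ Z1 G hG.kpos ⊓ LinearMap.ker sstar) ∧
    -- Φ restricts to a bijection (group isomorphism) between the two groups
    Set.BijOn Φ (LinearMap.ker (oneC - Amap) : Set _)
      ((Z1 G hG.kpos ⊓ LinearMap.ker sstar : Submodule ℤ (G.E → ℤ)) : Set _) ∧
    -- the inverse Υ: with n₁ᵘ := −Σ_{i≥2} nᵢᵘ, Υ(Σ n γ) = Σ n δ lies in the kernel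
    -- and Φ inverts it
    (∀ n : (u : G.V0) → Fin (G.k u) → ℤ,
      (∀ u, n u ⟨0, hG.kpos u⟩ =
        - ∑ i ∈ Finset.univ.filter (fun i => i ≠ (⟨0, hG.kpos u⟩ : Fin (G.k u))), n u i) →
      (∑ᶠ u : G.V0, ∑ i ∈ Finset.univ.filter
          (fun i => i ≠ (⟨0, hG.kpos u⟩ : Fin (G.k u))), n u i • gammaB G hG.kpos u i)
        ∈ LinearMap.ker sstar →
      ((fun p : Σ u : G.V0, Fin (G.k u) => n p.1 p.2) ∈ LinearMap.ker (oneC - Amap) ∧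
        Φ (fun p : Σ u : G.V0, Fin (G.k u) => n p.1 p.2) =
          ∑ᶠ u : G.V0, ∑ i ∈ Finset.univ.filter
            (fun i => i ≠ (⟨0, hG.kpos u⟩ : Fin (G.k u))), n u i • gammaB G hG.kpos u i)) := by
  have := hG.finV0
  have hΦ' : ∀ p : Σ u, Fin (G.k u), Φ (deltaFn p) = gammaB G hG.kpos p.1 p.2 := fun p => by
    rw [hΦ, BipGraphIdx.ite_eq_gammaB]
  have hK := hG.mem_ker_sub_iff oneC Amap h1 hA sstar hs
  have hΦK := hG.apply_eq_neg_funLeft_of_sigmaFiberSum_eq_zero Φ hΦ'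
  have mapsTo : ∀ z ∈ LinearMap.ker (oneC - Amap), Φ z ∈ Z1 G hG.kpos ⊓ LinearMap.ker sstar :=
    fun z hz => by
      obtain ⟨hz1, hz2⟩ := (hK z).1 hz
      refine Submodule.mem_inf.2 ⟨BipGraphIdx.apply_mem_Z1 Φ hΦ' z, ?_⟩
      rw [LinearMap.mem_ker, hΦK z hz1, map_neg, hz2, neg_zero]
  refine ⟨mapsTo, ⟨mapsTo, ?_, ?_⟩, ?_⟩
  · intro z hz z' hz' h
    apply LinearMap.funLeft_injective_of_surjective ℤ ℤ _ hG.cls_surjective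
    simpa [hΦK z ((hK z).1 hz).1, hΦK z' ((hK z').1 hz').1] using h
  · rintro w ⟨hwZ, hws⟩
    obtain ⟨f, hf, rfl⟩ := hG.Z1_le_map_ker_sigmaFiberSum hwZ
    have hf' : sigmaFiberSum _ (-f) = 0 := by simpa using hf
    exact ⟨-f, (hK _).2 ⟨hf', by simpa using hws⟩, by simp [hΦK _ hf']⟩
  · intro n hn hker
    have hΦn := BipGraphIdx.apply_eq_finsum_sum_smul_gammaB Φ hΦ' n
    have hz : sigmaFiberSum _ (fun p : Σ u, Fin (G.k u) => n p.1 p.2) = 0 :=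
      funext fun u => Finset.sum_eq_zero_of_apply_eq_neg_sum_filter_ne (n u) (hn u)
    rw [← hΦn, LinearMap.mem_ker, hΦK _ hz] at hker
    exact ⟨(hK _).2 ⟨hz, by simpa using hker⟩, hΦn⟩
end

section
/- Let A be a unital C*-algebra and x, y ∈ A partial isometries with xx* = yy* = e and x*x = y*y = f. Then w := [[x, 1−e],[1−f, x*]] ∈ M₂(A) is a unitary, and w*·[[1−e+yx*, 0],[0, 1]]·w = [[1−f+x*y, 0],[0, 1]]. -/
/-- Let `A` be a unital C*-algebra and `x, y ∈ A` partial isometries with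
`xx* = yy* = e` and `x*x = y*y = f`.  Then `w = [[x, 1−e],[1−f, x*]] ∈ M₂(A)` is a
unitary, and `w*·[[1−e+yx*, 0],[0, 1]]·w = [[1−f+x*y, 0],[0, 1]]`. -/
theorem stmt12 {A : Type} [NormedRing A] [StarRing A] [CStarRing A] [NormedAlgebra ℂ A]
    [CompleteSpace A] [StarModule ℂ A] (x y : A)
    (hx : x * star x * x = x) (hy : y * star y * y = y)
    (he : x * star x = y * star y) (hf : star x * x = star y * y) :
    !![x, 1 - x * star x; 1 - star x * x, star x] ∈ unitary (Matrix (Fin 2) (Fin 2) A) ∧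
    star (!![x, 1 - x * star x; 1 - star x * x, star x]) *
        !![1 - x * star x + y * star x, 0; 0, 1] *
        !![x, 1 - x * star x; 1 - star x * x, star x] =
      !![1 - star x * x + star x * y, 0; 0, 1] := by
  have h1 : x * (star x * x) = x := by rw [← mul_assoc, hx]
  have h2 : star x * (x * star x) = star x := by
    have := congrArg star hx; simpa [star_mul, mul_assoc] using this
  have h3 : y * (star x * x) = y := by rw [hf, ← mul_assoc, hy]
  have h4 : x * (star x * y) = y := by
    rw [← mul_assoc, he, mul_assoc, ← mul_assoc, hy]
  have hsw : star (!![x, 1 - x * star x; 1 - star x * x, star x]) =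
      !![star x, 1 - star x * x; 1 - x * star x, x] := by
    ext i j
    fin_cases i <;> fin_cases j <;>
      simp [Matrix.star_apply, star_sub, star_mul]
  constructor
  · rw [Unitary.mem_iff, hsw, Matrix.mul_fin_two, Matrix.mul_fin_two, Matrix.one_fin_two]
    constructor <;>
      (ext i j; fin_cases i <;> fin_cases j <;>
        (simp only [Matrix.cons_val', Matrix.cons_val_zero, Matrix.cons_val_one,
            Matrix.head_cons, Matrix.head_fin_const, Matrix.empty_val',
            Matrix.cons_val_fin_one, Matrix.of_apply, Fin.zero_eta, Fin.mk_one];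
          simp only [mul_sub, sub_mul, mul_add, add_mul, mul_one, one_mul, mul_zero,
            zero_mul, mul_assoc, h1, h2, h3, h4];
          abel))
  · rw [hsw, Matrix.mul_fin_two, Matrix.mul_fin_two]
    ext i j; fin_cases i <;> fin_cases j <;>
      (simp only [Matrix.cons_val', Matrix.cons_val_zero, Matrix.cons_val_one,
          Matrix.head_cons, Matrix.head_fin_const, Matrix.empty_val',
          Matrix.cons_val_fin_one, Matrix.of_apply, Fin.zero_eta, Fin.mk_one];
        simp only [mul_sub, sub_mul, mul_add, add_mul, mul_one, one_mul, mul_zero,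
          zero_mul, mul_assoc, h1, h2, h3, h4, sub_zero, add_zero, zero_add];
        abel)
end

section
/- Let π* : (E,C) → (F,D) be a locally complete map of finite bipartite separated graphs, given by a complete subobject (G,L) of (F,D) and a graph homomorphism π = (π⁰,π¹) : G → E. Define (G₁,L¹) by: G₁^{0,0} = G^{0,1}; G₁^{0,1} is the set of vertices v(x₁,…,x_l) of F₁^{0,1} whose underlying vertex u lies in G^{0,0}; L¹_w = {X(x) : x ∈ s_G⁻¹(w)} for w ∈ G₁^{0,0}; and G₁¹ is the union of the sets in L¹. For u ∈ G^{0,0} write D_u = {X₁,…,X_l} with L_u = {X₁,…,X_k}, so that C_{π⁰(u)} = {π¹(X₁),…,π¹(X_k)}. Define ρ⁰(w) = π⁰(w) for w ∈ G₁^{0,0} = G^{0,1}; ρ⁰(v(x₁,…,x_k,x_{k+1},…,x_l)) = v(π¹(x₁),…,π¹(x_k)); and ρ¹(α^{xᵢ}(x₁,…,x̂ᵢ,…,x_k,x_{k+1},…,x_l)) = α^{π¹(xᵢ)}(π¹(x₁),…,π¹(xᵢ)^,…,π¹(x_k)) for 1 ≤ i ≤ k. Then (G₁,L¹) is a complete subobject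 of (F₁,D¹), ρ = (ρ⁰,ρ¹) is a well-defined graph homomorphism G₁ → E₁, and ρ* is a locally complete map (E₁,C¹) → (F₁,D¹), i.e., it satisfies conditions (1)–(4) of the definition of locally complete map. -/
/-- A bipartite separated graph: all edges go from a vertex of `V1 = E^{0,1}` to a
vertex of `V0 = E^{0,0}`, and `C v` is a family of subsets of `r⁻¹(v)`. -/
structure BSG where
  V0 : Type
  V1 : Type
  E : Type
  s : E → V1
  r : E → V0
  C : V0 → Set (Set E)

/-- Being a finite bipartite separated graph. -/
structure BSG.Valid (G : BSG) : Prop where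
  finV0 : Finite G.V0
  finV1 : Finite G.V1
  finE : Finite G.E
  mem_r : ∀ v X, X ∈ G.C v → ∀ e ∈ X, G.r e = v
  nonempty_class : ∀ v X, X ∈ G.C v → X.Nonempty
  disj : ∀ v, (G.C v).PairwiseDisjoint id
  cover : ∀ e : G.E, ∃ X ∈ G.C (G.r e), e ∈ X
  C_nonempty : ∀ v : G.V0, (G.C v).Nonempty
  s_surj : Function.Surjective G.s

/-- The set of new vertices `v(x₁,…,x_{k_u})` of the graph `(E₁, C¹)`: pairs of a
vertex `u ∈ E^{0,0}` and a choice of one edge from each class of `C_u`. -/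
def BSG.NewVert (G : BSG) : Type :=
  Σ u : G.V0, (X : {X : Set G.E // X ∈ G.C u}) → ↥X.1

/-- The set of edges of `(E₁, C¹)`: an edge `α^{xᵢ}(x₁,…,x̂ᵢ,…,x_{k_u})` is encoded as
the pair of its source vertex `v(x₁,…,x_{k_u})` and the class containing `xᵢ`. -/
def BSG.NewEdge (G : BSG) : Type :=
  Σ p : G.NewVert, {X : Set G.E // X ∈ G.C p.1}

/-- The edge `xᵢ ∈ E¹` attached to an edge `α^{xᵢ}(…)` of `(E₁,C¹)`. -/
def BSG.edgeOf (G : BSG) (e : G.NewEdge) : G.E := (e.1.2 e.2 : G.E)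

/-- The class `X(x) = {α^{x}(…)} ⊆ E₁¹` attached to an edge `x ∈ E¹`. -/
def BSG.Xof (G : BSG) (x : G.E) : Set G.NewEdge := {e | G.edgeOf e = x}

/-- The finite bipartite separated graph `(E₁, C¹)` associated to `(E,C)`:
`E₁^{0,0} = E^{0,1}`, `E₁^{0,1}` is the set of new vertices `v(x₁,…,x_{k_u})`, the
edge `α^{xᵢ}(…)` has source `v(x₁,…,x_{k_u})` and range `s(xᵢ)`, and
`C¹_w = {X(x) : x ∈ s⁻¹(w)}`. -/
def BSG.next (G : BSG) : BSG where
  V0 := G.V1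
  V1 := G.NewVert
  E := G.NewEdge
  s := fun e => e.1
  r := fun e => G.s (G.edgeOf e)
  C := fun w => {S | ∃ x : G.E, G.s x = w ∧ S = G.Xof x}

/-- The set of edges of the complete subobject determined by the family of classes
`L`: the union of all classes belonging to some `L v`. -/
def edgeSetOf (F : BSG) (L : F.V0 → Set (Set F.E)) : Set F.E :=
  {x | ∃ v, ∃ Y ∈ L v, x ∈ Y}

/-- `(G,L)`, given by the vertex sets `SV0 ⊆ F^{0,0}`, `SV1 ⊆ F^{0,1}` and the family
of classes `L ⊆ D`, is a complete subobject of the finite bipartite separated graph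
`(F,D)` (in particular it is itself a finite bipartite separated graph). -/
structure CompleteSub (F : BSG) (SV0 : Set F.V0) (SV1 : Set F.V1)
    (L : F.V0 → Set (Set F.E)) : Prop where
  sub : ∀ v, L v ⊆ F.C v
  range_in : ∀ v, (L v).Nonempty → v ∈ SV0
  r_nonempty : ∀ v ∈ SV0, (L v).Nonempty
  edges_s : ∀ v, ∀ Y ∈ L v, ∀ x ∈ Y, F.s x ∈ SV1
  s_nonempty : ∀ w ∈ SV1, ∃ x ∈ edgeSetOf F L, F.s x = w

/-- A locally complete map `π* : (E,C) → (F,D)`: a complete subobject `(G,L)` of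
`(F,D)` (given by `SV0`, `SV1`, `L`) together with a graph homomorphism
`π = (π⁰,π¹) : G → E`, encoded by (arbitrary) total extensions `π0`, `π1`, `πe`, such
that: π is a graph homomorphism on `G`; (1) `π⁰` and `π¹` are surjective;
(2) `π¹(X) ∈ C` for each `X ∈ L`; (3) `π¹` restricts to a bijection
`s_G⁻¹(w) → s_E⁻¹(π⁰(w))` for each `w ∈ G^{0,1}`; (4) `π̃ : L → C` restricts to a
bijection `L_v → C_{π⁰(v)}` for each `v ∈ G^{0,0}`. -/
structure IsLocallyComplete (Eg F : BSG) (SV0 : Set F.V0) (SV1 : Set F.V1)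
    (L : F.V0 → Set (Set F.E))
    (π0 : F.V0 → Eg.V0) (π1 : F.V1 → Eg.V1) (πe : F.E → Eg.E) : Prop where
  hom_s : ∀ x ∈ edgeSetOf F L, Eg.s (πe x) = π1 (F.s x)
  hom_r : ∀ x ∈ edgeSetOf F L, Eg.r (πe x) = π0 (F.r x)
  surj0 : ∀ v : Eg.V0, ∃ u ∈ SV0, π0 u = v
  surj1 : ∀ w : Eg.V1, ∃ u ∈ SV1, π1 u = w
  surjE : ∀ y : Eg.E, ∃ x ∈ edgeSetOf F L, πe x = y
  cls : ∀ v, ∀ Y ∈ L v, πe '' Y ∈ Eg.C (π0 v)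
  fib : ∀ w ∈ SV1,
    Set.BijOn πe {x | x ∈ edgeSetOf F L ∧ F.s x = w} {y : Eg.E | Eg.s y = π1 w}
  clsbij : ∀ v ∈ SV0, Set.BijOn (fun Y => πe '' Y) (L v) (Eg.C (π0 v))

/-!
Over a vertex `u ∈ G^{0,0}`, condition (4) for `π` identifies the classes of `L_u` with
those of `C_{π⁰(u)}`, so `ρ⁰(v(x₁,…,x_l))` is well defined. Conversely, every vertex
`v(y₁,…,y_k)` of `E₁` over `π⁰(u)` is hit: in each class `X ∈ L_u` pick a preimage under `π¹` of
the entry at `π¹(X)`, and one of the edges `x ∈ X` may be prescribed. Hence `ρ¹` maps `X(x)`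
onto `X(π¹(x))`, and then condition (3) for `π` becomes condition (4) for `ρ`, while
condition (4) for `π` becomes condition (3) for `ρ`.
-/

namespace BSG

variable {G : BSG}

lemma edgeOf_mem (α : G.NewEdge) : G.edgeOf α ∈ α.2.1 := (α.1.2 α.2).2

lemma newVert_ext {q q' : G.NewVert} (h1 : q.1 = q'.1)
    (h2 : ∀ (Y : Set G.E) (hY : Y ∈ G.C q.1) (hY' : Y ∈ G.C q'.1),
      (q.2 ⟨Y, hY⟩ : G.E) = q'.2 ⟨Y, hY'⟩) : q = q' := by
  obtain ⟨u, f⟩ := q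
  obtain ⟨u', f'⟩ := q'
  obtain rfl : u = u' := h1
  exact congrArg _ (funext fun Y => Subtype.ext (h2 Y.1 Y.2 Y.2))

lemma newEdge_ext {β β' : G.NewEdge} (h1 : β.1 = β'.1) (h2 : β.2.1 = β'.2.1) : β = β' := by
  obtain ⟨p, X⟩ := β
  obtain ⟨p', X'⟩ := β'
  obtain rfl : p = p' := h1
  exact congrArg _ (Subtype.ext h2)

lemma Valid.eq_of_mem_of_mem (hG : G.Valid) {u v : G.V0} {X Y : Set G.E} {x : G.E}
    (hX : X ∈ G.C u) (hY : Y ∈ G.C v) (hxX : x ∈ X) (hxY : x ∈ Y) : u = v ∧ X = Y := by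
  obtain rfl : u = v := (hG.mem_r u X hX x hxX).symm.trans (hG.mem_r v Y hY x hxY)
  exact ⟨rfl, (hG.disj u).elim hX hY (Set.not_disjoint_iff.mpr ⟨x, hxX, hxY⟩)⟩

open Classical in
lemma Valid.exists_edgeOf_eq (hG : G.Valid) (y : G.E) : ∃ β : G.NewEdge, G.edgeOf β = y := by
  obtain ⟨Y, hY, hyY⟩ := hG.cover y
  let f : (X : {X : Set G.E // X ∈ G.C (G.r y)}) → ↥X.1 := fun X =>
    if h : y ∈ X.1 then ⟨y, h⟩ else (hG.nonempty_class _ _ X.2).to_subtype.some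
  exact ⟨⟨⟨G.r y, f⟩, ⟨Y, hY⟩⟩, by simp only [BSG.edgeOf, f, dif_pos hyY]⟩

lemma Valid.Xof_injective (hG : G.Valid) : Function.Injective G.Xof := by
  intro x y h
  obtain ⟨β, hβ⟩ := hG.exists_edgeOf_eq x
  exact hβ.symm.trans (show β ∈ G.Xof y from h ▸ hβ)

end BSG

/-- The family `L¹` of classes of `(G₁, L¹)`. -/
def nextClasses (F : BSG) (L : F.V0 → Set (Set F.E)) : F.next.V0 → Set (Set F.next.E) :=
  fun w => {S | ∃ x ∈ edgeSetOf F L, F.s x = w ∧ S = F.Xof x}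

section NextSubobject

variable {F : BSG} {SV0 : Set F.V0} {SV1 : Set F.V1} {L : F.V0 → Set (Set F.E)}

lemma mem_of_mem_edgeSetOf (hF : F.Valid) (hL : ∀ v, L v ⊆ F.C v) {x : F.E}
    (hx : x ∈ edgeSetOf F L) {u : F.V0} {X : Set F.E} (hX : X ∈ F.C u) (hxX : x ∈ X) :
    X ∈ L u := by
  obtain ⟨v, Y, hY, hxY⟩ := hx
  obtain ⟨rfl, rfl⟩ := hF.eq_of_mem_of_mem (hL v hY) hX hxY hxX
  exact hY

lemma edgeOf_mem_edgeSetOf {α : F.NewEdge} (hα : α.2.1 ∈ L α.1.1) :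
    F.edgeOf α ∈ edgeSetOf F L :=
  ⟨_, _, hα, F.edgeOf_mem α⟩

lemma mem_edgeSetOf_nextClasses_iff (hF : F.Valid) (hL : ∀ v, L v ⊆ F.C v) {α : F.next.E} :
    α ∈ edgeSetOf F.next (nextClasses F L) ↔ α.2.1 ∈ L α.1.1 := by
  constructor
  · rintro ⟨w, _, ⟨x, hx, -, rfl⟩, hαx⟩
    obtain rfl : F.edgeOf α = x := hαx
    exact mem_of_mem_edgeSetOf hF hL hx α.2.2 (F.edgeOf_mem α)
  · intro hα
    exact ⟨_, _, ⟨_, edgeOf_mem_edgeSetOf hα, rfl, rfl⟩, rfl⟩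

lemma completeSub_next (hF : F.Valid) (hsub : CompleteSub F SV0 SV1 L) :
    CompleteSub F.next SV1 {p : F.NewVert | p.1 ∈ SV0} (nextClasses F L) where
  sub _ _ := fun ⟨x, _, hsx, hS⟩ => ⟨x, hsx, hS⟩
  range_in := by
    rintro w ⟨_, x, ⟨v, Y, hY, hxY⟩, rfl, -⟩
    exact hsub.edges_s v Y hY x hxY
  r_nonempty w hw := by
    obtain ⟨x, hx, hsx⟩ := hsub.s_nonempty w hw
    exact ⟨_, x, hx, hsx, rfl⟩
  edges_s w S hS α hαS := by
    have hα := (mem_edgeSetOf_nextClasses_iff hF hsub.sub).1 ⟨w, S, hS, hαS⟩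
    exact hsub.range_in _ ⟨_, hα⟩
  s_nonempty p hp := by
    obtain ⟨X, hX⟩ := hsub.r_nonempty p.1 hp
    exact ⟨⟨p, X, hsub.sub _ hX⟩, (mem_edgeSetOf_nextClasses_iff hF hsub.sub).2 hX, rfl⟩

end NextSubobject

open Classical in
/-- `ρ⁰(v(x₁,…,x_l)) = v(π¹(x₁),…,π¹(x_k))`: the entry at the class `π¹(X)`, `X ∈ L_u`, is `π¹`
of the entry at `X`. Off `G₁` the value is arbitrary. -/
noncomputable def rhoVert {Eg F : BSG} (L : F.V0 → Set (Set F.E)) (π0 : F.V0 → Eg.V0)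
    (πe : F.E → Eg.E) (hE : Eg.Valid) (p : F.NewVert) : Eg.NewVert :=
  ⟨π0 p.1, fun Y =>
    if h : ∃ X : {X : Set F.E // X ∈ F.C p.1}, X.1 ∈ L p.1 ∧ πe '' X.1 = Y.1 then
      ⟨πe (p.2 h.choose), h.choose_spec.2.subset (Set.mem_image_of_mem πe (p.2 h.choose).2)⟩
    else (hE.nonempty_class _ _ Y.2).to_subtype.some⟩

open Classical in
noncomputable def rhoEdge {Eg F : BSG} (L : F.V0 → Set (Set F.E)) (π0 : F.V0 → Eg.V0)
    (πe : F.E → Eg.E) (hE : Eg.Valid) (e : F.NewEdge) : Eg.NewEdge :=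
  ⟨rhoVert L π0 πe hE e.1,
    if h : πe '' e.2.1 ∈ Eg.C (π0 e.1.1) then ⟨_, h⟩ else ⟨_, (hE.C_nonempty _).some_mem⟩⟩

section Rho

variable {Eg F : BSG} {SV0 : Set F.V0} {SV1 : Set F.V1} {L : F.V0 → Set (Set F.E)}
  {π0 : F.V0 → Eg.V0} {π1 : F.V1 → Eg.V1} {πe : F.E → Eg.E} {hE : Eg.Valid}

lemma rhoVert_apply (hπ : IsLocallyComplete Eg F SV0 SV1 L π0 π1 πe) {p : F.NewVert}
    (hp : p.1 ∈ SV0) (X : {X : Set F.E // X ∈ F.C p.1}) (hX : X.1 ∈ L p.1)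
    (Y : {Y : Set Eg.E // Y ∈ Eg.C (π0 p.1)}) (hY : Y.1 = πe '' X.1) :
    ((rhoVert L π0 πe hE p).2 Y : Eg.E) = πe (p.2 X) := by
  have h : ∃ X : {X : Set F.E // X ∈ F.C p.1}, X.1 ∈ L p.1 ∧ πe '' X.1 = Y.1 :=
    ⟨X, hX, hY.symm⟩
  have hX' : h.choose = X :=
    Subtype.ext <| (hπ.clsbij p.1 hp).injOn h.choose_spec.1 hX (h.choose_spec.2.trans hY)
  simp only [rhoVert, dif_pos h]
  rw [hX']

lemma rhoEdge_snd (hπ : IsLocallyComplete Eg F SV0 SV1 L π0 π1 πe) {e : F.NewEdge}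
    (he : e.2.1 ∈ L e.1.1) : (rhoEdge L π0 πe hE e).2.1 = πe '' e.2.1 := by
  simp only [rhoEdge, dif_pos (hπ.cls _ _ he)]

lemma edgeOf_rhoEdge (hsub : CompleteSub F SV0 SV1 L)
    (hπ : IsLocallyComplete Eg F SV0 SV1 L π0 π1 πe) {α : F.NewEdge} (hα : α.2.1 ∈ L α.1.1) :
    Eg.edgeOf (rhoEdge L π0 πe hE α) = πe (F.edgeOf α) :=
  rhoVert_apply (hE := hE) hπ (hsub.range_in _ ⟨_, hα⟩) α.2 hα _ (rhoEdge_snd hπ hα)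

lemma rhoVert_eq_of_entries (hsub : CompleteSub F SV0 SV1 L)
    (hπ : IsLocallyComplete Eg F SV0 SV1 L π0 π1 πe) {v : F.V0} (hv : v ∈ SV0)
    (g : (X : {X : Set F.E // X ∈ F.C v}) → ↥X.1)
    (f : (Y : {Y : Set Eg.E // Y ∈ Eg.C (π0 v)}) → ↥Y.1)
    (hgf : ∀ X (hX : X.1 ∈ L v), πe (g X) = f ⟨πe '' X.1, hπ.cls v X.1 hX⟩) :
    rhoVert L π0 πe hE ⟨v, g⟩ = ⟨π0 v, f⟩ := by
  refine BSG.newVert_ext rfl fun Y hY _ => ?_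
  obtain ⟨X, hX, rfl⟩ := (hπ.clsbij v hv).surjOn hY
  exact (rhoVert_apply hπ hv ⟨X, hsub.sub v hX⟩ hX ⟨_, hY⟩ rfl).trans (hgf _ hX)

lemma exists_rhoVert_eq_with_entry (hF : F.Valid) (hsub : CompleteSub F SV0 SV1 L)
    (hπ : IsLocallyComplete Eg F SV0 SV1 L π0 π1 πe) {v : F.V0} (hv : v ∈ SV0)
    (f : (Y : {Y : Set Eg.E // Y ∈ Eg.C (π0 v)}) → ↥Y.1) {X₀ : Set F.E} (hX₀ : X₀ ∈ L v)
    {x : F.E} (hx : x ∈ X₀) (hfx : (f ⟨πe '' X₀, hπ.cls v X₀ hX₀⟩ : Eg.E) = πe x) :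
    ∃ g : (X : {X : Set F.E // X ∈ F.C v}) → ↥X.1,
      (g ⟨X₀, hsub.sub v hX₀⟩ : F.E) = x ∧ rhoVert L π0 πe hE ⟨v, g⟩ = ⟨π0 v, f⟩ := by
  have entry : ∀ X : {X : Set F.E // X ∈ F.C v}, ∃ y : ↥X.1, (X.1 = X₀ → (y : F.E) = x) ∧
      ∀ hX : X.1 ∈ L v, πe y = f ⟨πe '' X.1, hπ.cls v X.1 hX⟩ := by
    rintro ⟨X, hXC⟩
    by_cases h0 : X = X₀
    · subst h0
      exact ⟨⟨x, hx⟩, fun _ => rfl, fun _ => hfx.symm⟩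
    by_cases hX : X ∈ L v
    · obtain ⟨y, hy, hfy⟩ := (f ⟨πe '' X, hπ.cls v X hX⟩).2
      exact ⟨⟨y, hy⟩, fun h => absurd h h0, fun _ => hfy⟩
    · obtain ⟨y, hy⟩ := hF.nonempty_class v X hXC
      exact ⟨⟨y, hy⟩, fun h => absurd h h0, fun h => absurd h hX⟩
  choose g hgx hgf using entry
  exact ⟨g, hgx _ rfl, rhoVert_eq_of_entries hsub hπ hv g f hgf⟩

lemma exists_rhoVert_eq (hF : F.Valid) (hsub : CompleteSub F SV0 SV1 L)
    (hπ : IsLocallyComplete Eg F SV0 SV1 L π0 π1 πe) (q : Eg.NewVert) :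
    ∃ p : F.NewVert, p.1 ∈ SV0 ∧ rhoVert L π0 πe hE p = q := by
  obtain ⟨u, f⟩ := q
  obtain ⟨v, hv, rfl⟩ := hπ.surj0 u
  obtain ⟨X₀, hX₀⟩ := hsub.r_nonempty v hv
  obtain ⟨x, hx, hfx⟩ := (f ⟨πe '' X₀, hπ.cls v X₀ hX₀⟩).2
  obtain ⟨g, -, hg⟩ := exists_rhoVert_eq_with_entry hF hsub hπ hv f hX₀ hx hfx.symm
  exact ⟨⟨v, g⟩, hv, hg⟩

lemma rhoEdge_image_Xof (hF : F.Valid) (hsub : CompleteSub F SV0 SV1 L)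
    (hπ : IsLocallyComplete Eg F SV0 SV1 L π0 π1 πe) {x : F.E} (hx : x ∈ edgeSetOf F L) :
    rhoEdge L π0 πe hE '' F.Xof x = Eg.Xof (πe x) := by
  apply Set.Subset.antisymm
  · rintro _ ⟨α, hαx, rfl⟩
    obtain rfl : F.edgeOf α = x := hαx
    exact edgeOf_rhoEdge hsub hπ (mem_of_mem_edgeSetOf hF hsub.sub hx α.2.2 (F.edgeOf_mem α))
  · rintro ⟨⟨u, f⟩, Y, hY⟩ hfY
    change (f ⟨Y, hY⟩ : Eg.E) = πe x at hfY
    obtain ⟨v, X₀, hX₀, hxX₀⟩ := hx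
    obtain ⟨rfl, rfl⟩ := hE.eq_of_mem_of_mem hY (hπ.cls v X₀ hX₀) (hfY ▸ (f ⟨Y, hY⟩).2)
      (Set.mem_image_of_mem πe hxX₀)
    obtain ⟨g, hgx, hg⟩ := exists_rhoVert_eq_with_entry (hE := hE) hF hsub hπ
      (hsub.range_in v ⟨_, hX₀⟩) f hX₀ hxX₀ hfY
    exact ⟨⟨⟨v, g⟩, X₀, hsub.sub v hX₀⟩, hgx, BSG.newEdge_ext hg (rhoEdge_snd hπ hX₀)⟩

lemma bijOn_rhoEdge_fiber (hF : F.Valid) (hsub : CompleteSub F SV0 SV1 L)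
    (hπ : IsLocallyComplete Eg F SV0 SV1 L π0 π1 πe) {p : F.NewVert} (hp : p.1 ∈ SV0) :
    Set.BijOn (rhoEdge L π0 πe hE)
      {α | α ∈ edgeSetOf F.next (nextClasses F L) ∧ F.next.s α = p}
      {β | Eg.next.s β = rhoVert L π0 πe hE p} := by
  refine ⟨?_, ?_, ?_⟩
  · rintro α ⟨-, rfl⟩
    rfl
  · rintro ⟨q, X⟩ ⟨hX, hq⟩ ⟨q', X'⟩ ⟨hX', hq'⟩ h
    obtain rfl : q = p := hq
    obtain rfl : q' = q := hq'
    replace hX := (mem_edgeSetOf_nextClasses_iff hF hsub.sub).1 hX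
    replace hX' := (mem_edgeSetOf_nextClasses_iff hF hsub.sub).1 hX'
    refine BSG.newEdge_ext rfl ((hπ.clsbij _ hp).injOn hX hX' ?_)
    rw [← rhoEdge_snd (hE := hE) hπ hX, ← rhoEdge_snd (hE := hE) hπ hX', h]
  · rintro ⟨q, Y, hY⟩ hq
    obtain rfl : q = _ := hq
    obtain ⟨X, hX, rfl⟩ := (hπ.clsbij p.1 hp).surjOn hY
    exact ⟨⟨p, X, hsub.sub _ hX⟩, ⟨(mem_edgeSetOf_nextClasses_iff hF hsub.sub).2 hX, rfl⟩,
      BSG.newEdge_ext rfl (rhoEdge_snd hπ hX)⟩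

lemma bijOn_image_rhoEdge_nextClasses (hF : F.Valid) (hsub : CompleteSub F SV0 SV1 L)
    (hπ : IsLocallyComplete Eg F SV0 SV1 L π0 π1 πe) {w : F.V1} (hw : w ∈ SV1) :
    Set.BijOn (fun S => rhoEdge L π0 πe hE '' S) (nextClasses F L w) (Eg.next.C (π1 w)) := by
  refine ⟨?_, ?_, ?_⟩
  · rintro _ ⟨x, hx, rfl, rfl⟩
    exact ⟨πe x, hπ.hom_s x hx, rhoEdge_image_Xof hF hsub hπ hx⟩
  · rintro _ ⟨x, hx, hsx, rfl⟩ _ ⟨x', hx', hsx', rfl⟩ h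
    simp only [rhoEdge_image_Xof hF hsub hπ hx, rhoEdge_image_Xof hF hsub hπ hx'] at h
    rw [(hπ.fib w hw).injOn ⟨hx, hsx⟩ ⟨hx', hsx'⟩ (hE.Xof_injective h)]
  · rintro _ ⟨y, hy, rfl⟩
    obtain ⟨x, ⟨hx, hsx⟩, rfl⟩ := (hπ.fib w hw).surjOn hy
    exact ⟨F.Xof x, ⟨x, hx, hsx, rfl⟩, rhoEdge_image_Xof hF hsub hπ hx⟩

lemma isLocallyComplete_next (hF : F.Valid) (hsub : CompleteSub F SV0 SV1 L)
    (hπ : IsLocallyComplete Eg F SV0 SV1 L π0 π1 πe) :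
    IsLocallyComplete Eg.next F.next SV1 {p : F.NewVert | p.1 ∈ SV0} (nextClasses F L) π1
      (rhoVert L π0 πe hE) (rhoEdge L π0 πe hE) where
  hom_s _ _ := rfl
  hom_r α hα := by
    replace hα := (mem_edgeSetOf_nextClasses_iff hF hsub.sub).1 hα
    exact (congrArg Eg.s (edgeOf_rhoEdge hsub hπ hα)).trans
      (hπ.hom_s _ (edgeOf_mem_edgeSetOf hα))
  surj0 := hπ.surj1
  surj1 := exists_rhoVert_eq hF hsub hπ
  surjE β := by
    obtain ⟨p, hp, hβ⟩ := exists_rhoVert_eq (hE := hE) hF hsub hπ β.1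
    obtain ⟨α, ⟨hα, -⟩, rfl⟩ := (bijOn_rhoEdge_fiber hF hsub hπ hp).surjOn hβ.symm
    exact ⟨α, hα, rfl⟩
  cls w S hS := (bijOn_image_rhoEdge_nextClasses hF hsub hπ
    ((completeSub_next hF hsub).range_in w ⟨S, hS⟩)).mapsTo hS
  fib _ hp := bijOn_rhoEdge_fiber hF hsub hπ hp
  clsbij _ hw := bijOn_image_rhoEdge_nextClasses hF hsub hπ hw

end Rho

/-- Lemma 6.7 (second part): given a locally complete map
`π* : (E,C) → (F,D)` of finite bipartite separated graphs, the data
`(G₁,L¹)` (with `G₁^{0,0} = G^{0,1}`, `G₁^{0,1}` the new vertices over `G^{0,0}`, and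
`L¹_w = {X(x) : x ∈ s_G⁻¹(w)}`) is a complete subobject of `(F₁,D¹)`, the formulas
`ρ⁰(w) = π⁰(w)`, `ρ⁰(v(x₁,…,x_l)) = v(π¹(x₁),…,π¹(x_k))` and
`ρ¹(α^{xᵢ}(…)) = α^{π¹(xᵢ)}(π¹(x₁),…,π¹(xᵢ)^,…,π¹(x_k))` give a well-defined graph
homomorphism `ρ : G₁ → E₁`, and `ρ*` is a locally complete map
`(E₁,C¹) → (F₁,D¹)`. -/
theorem stmt13 (Eg F : BSG) (hE : Eg.Valid) (hF : F.Valid)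
    (SV0 : Set F.V0) (SV1 : Set F.V1) (L : F.V0 → Set (Set F.E))
    (hsub : CompleteSub F SV0 SV1 L)
    (π0 : F.V0 → Eg.V0) (π1 : F.V1 → Eg.V1) (πe : F.E → Eg.E)
    (hπ : IsLocallyComplete Eg F SV0 SV1 L π0 π1 πe) :
    -- (G₁, L¹) is a complete subobject of (F₁, D¹)
    CompleteSub F.next (SV1 : Set F.next.V0)
      ({p : F.NewVert | p.1 ∈ SV0} : Set F.next.V1)
      (fun w => {S | ∃ x ∈ edgeSetOf F L, F.s x = w ∧ S = F.Xof x}) ∧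
    -- ρ is well defined and is a locally complete map (E₁,C¹) → (F₁,D¹)
    ∃ (ρnew : F.NewVert → Eg.NewVert) (ρe : F.NewEdge → Eg.NewEdge),
      -- defining formula for ρ⁰ on new vertices
      (∀ p : F.NewVert, p.1 ∈ SV0 →
        (ρnew p).1 = π0 p.1 ∧
        ∀ (X : {X : Set F.E // X ∈ F.C p.1}), X.1 ∈ L p.1 →
          ∀ (Y : {Y : Set Eg.E // Y ∈ Eg.C (ρnew p).1}), Y.1 = πe '' X.1 →
            ((ρnew p).2 Y : Eg.E) = πe (p.2 X : F.E)) ∧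
      -- defining formula for ρ¹
      (∀ e : F.NewEdge, e.2.1 ∈ L e.1.1 →
        (ρe e).1 = ρnew e.1 ∧ (ρe e).2.1 = πe '' e.2.1) ∧
      -- ρ* is a locally complete map (in particular ρ is a graph homomorphism)
      IsLocallyComplete Eg.next F.next (SV1 : Set F.next.V0)
        ({p : F.NewVert | p.1 ∈ SV0} : Set F.next.V1)
        (fun w => {S | ∃ x ∈ edgeSetOf F L, F.s x = w ∧ S = F.Xof x})
        π1 ρnew ρe := by
  exact ⟨completeSub_next hF hsub, rhoVert L π0 πe hE, rhoEdge L π0 πe hE,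
    fun p hp => ⟨rfl, fun X hX Y hY => rhoVert_apply hπ hp X hX Y hY⟩,
    fun _ he => ⟨rfl, rhoEdge_snd hπ he⟩, isLocallyComplete_next hF hsub hπ⟩
end

section
/- Let π* : (E,C) → (F,D) be a locally complete map of ordered finite bipartite separated graphs such that π¹ maps the least element of each Y ∈ L to the least element of π̃(Y) ∈ C. Then the induced locally complete map ρ* : (E₁,C¹) → (F₁,D¹) has the same property: ρ¹ maps the least element of each Y ∈ L¹ to the least element of ρ̃(Y) ∈ C¹ (with respect to the induced orders on (E₁,C¹) and (F₁,D¹)). -/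
/-- `x` is the least element of the subset `S` with respect to the total order on the
edges encoded by the (injective) rank function `rank`. -/
def IsLeastIn {alpha : Type} (rank : alpha → ℕ) (S : Set alpha) (x : alpha) : Prop :=
  x ∈ S ∧ ∀ y ∈ S, rank x ≤ rank y

/-- `e` is the least element of the class `X(x) ∈ C¹` of `(E₁,C¹)` with respect to the
order induced by the order on `(E,C)` (the left lexicographic order on the product of
the classes other than the class of `x`): equivalently, `e ∈ X(x)` and every other
coordinate of the tuple of `e` is the least element of its class. -/
def IsLeastOfNewClass (G : BSG) (rank : G.E → ℕ) (x : G.E) (e : G.NewEdge) : Prop :=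
  e ∈ G.Xof x ∧ ∀ (X : {X : Set G.E // X ∈ G.C e.1.1}), X ≠ e.2 →
    IsLeastIn rank X.1 ((e.1.2 X : G.E))

/-- Lemma 6.9 (Claim, last part): let `π* : (E,C) → (F,D)` be a locally complete map
of ordered finite bipartite separated graphs such that `π¹` maps the least element of
each `Y ∈ L` to the least element of `π̃(Y) ∈ C`.  Then the induced locally complete
map `ρ* : (E₁,C¹) → (F₁,D¹)` has the same property: `ρ¹` maps the least element of
each `Y ∈ L¹` to the least element of `ρ̃(Y) ∈ C¹`, with respect to the induced
orders. -/
theorem stmt14 (Eg F : BSG) (hE : Eg.Valid) (hF : F.Valid)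
    (SV0 : Set F.V0) (SV1 : Set F.V1) (L : F.V0 → Set (Set F.E))
    (hsub : CompleteSub F SV0 SV1 L)
    (π0 : F.V0 → Eg.V0) (π1 : F.V1 → Eg.V1) (πe : F.E → Eg.E)
    (hπ : IsLocallyComplete Eg F SV0 SV1 L π0 π1 πe)
    -- the orders on the classes of (E,C) and (F,D), encoded by injective rank maps
    (rankE : Eg.E → ℕ) (rankF : F.E → ℕ)
    (hrankE : Function.Injective rankE) (hrankF : Function.Injective rankF)
    -- π¹ maps the least element of each Y ∈ L to the least element of π̃(Y) ∈ C
    (hleast : ∀ v, ∀ Y ∈ L v, ∀ x, IsLeastIn rankF Y x →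
      IsLeastIn rankE (πe '' Y) (πe x))
    -- the induced map ρ, given by its defining formulas
    (ρnew : F.NewVert → Eg.NewVert) (ρe : F.NewEdge → Eg.NewEdge)
    (hρ0 : ∀ p : F.NewVert, p.1 ∈ SV0 →
      (ρnew p).1 = π0 p.1 ∧
      ∀ (X : {X : Set F.E // X ∈ F.C p.1}), X.1 ∈ L p.1 →
        ∀ (Y : {Y : Set Eg.E // Y ∈ Eg.C (ρnew p).1}), Y.1 = πe '' X.1 →
          ((ρnew p).2 Y : Eg.E) = πe (p.2 X : F.E))
    (hρ1 : ∀ e : F.NewEdge, e.2.1 ∈ L e.1.1 →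
      (ρe e).1 = ρnew e.1 ∧ (ρe e).2.1 = πe '' e.2.1)
    (hρ : IsLocallyComplete Eg.next F.next (SV1 : Set F.next.V0)
      ({p : F.NewVert | p.1 ∈ SV0} : Set F.next.V1)
      (fun w => {S | ∃ x ∈ edgeSetOf F L, F.s x = w ∧ S = F.Xof x})
      π1 ρnew ρe) :
    -- ρ¹ maps the least element of each class Y = X(x) ∈ L¹ to the least element of
    -- ρ̃(Y) = X(π¹(x)) ∈ C¹
    ∀ x ∈ edgeSetOf F L, ∀ e : F.NewEdge,
      IsLeastOfNewClass F rankF x e → IsLeastOfNewClass Eg rankE (πe x) (ρe e) := by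
  rintro x ⟨v, Y, hYL, hxY⟩ e ⟨hXof, hleast_e⟩
  have hxX : x ∈ e.2.1 := by rw [← hXof]; exact (e.1.2 e.2).2
  have hYC : Y ∈ F.C v := hsub.sub v hYL
  have hrv : F.r x = v := hF.mem_r v Y hYC x hxY
  have hre : F.r x = e.1.1 := hF.mem_r e.1.1 e.2.1 e.2.2 x hxX
  have hveq : v = e.1.1 := hrv.symm.trans hre
  subst hveq
  have hYeq : Y = e.2.1 := by
    by_contra hne
    exact Set.disjoint_left.mp (hF.disj e.1.1 hYC e.2.2 hne) hxY hxX
  have hL : e.2.1 ∈ L e.1.1 := hYeq ▸ hYL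
  have hv : e.1.1 ∈ SV0 := hsub.range_in e.1.1 ⟨e.2.1, hL⟩
  obtain ⟨h1, h2⟩ := hρ1 e hL
  obtain ⟨hρa, hρb⟩ := hρ0 e.1 hv
  generalize hq : ρe e = q at *
  obtain ⟨q1, q2⟩ := q
  have h1' : q1 = ρnew e.1 := h1
  subst h1'
  constructor
  · show ((ρnew e.1).2 q2 : Eg.E) = πe x
    rw [hρb e.2 hL q2 h2]
    exact congrArg πe hXof
  · intro Y' hne
    have hmem : Y'.1 ∈ Eg.C (π0 e.1.1) := hρa ▸ Y'.2
    obtain ⟨X', hX'L, hX'im⟩ := (hπ.clsbij e.1.1 hv).surjOn hmem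
    have hX'C : X' ∈ F.C e.1.1 := hsub.sub _ hX'L
    have hne' : (⟨X', hX'C⟩ : {X : Set F.E // X ∈ F.C e.1.1}) ≠ e.2 := by
      intro hEq
      apply hne
      apply Subtype.ext
      have : X' = e.2.1 := congrArg Subtype.val hEq
      rw [← hX'im, this]
      exact h2.symm
    have hl : IsLeastIn rankF X' (e.1.2 ⟨X', hX'C⟩) := hleast_e ⟨X', hX'C⟩ hne'
    have key := hleast e.1.1 X' hX'L _ hl
    have hval : ((ρnew e.1).2 Y' : Eg.E) = πe (e.1.2 ⟨X', hX'C⟩) :=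
      hρb ⟨X', hX'C⟩ hX'L Y' hX'im.symm
    show IsLeastIn rankE Y'.1 ((ρnew e.1).2 Y')
    rw [hval, ← hX'im]
    exact key
end

section
/- Let (E,C) be a finite bipartite separated graph, with canonical sequence (E_n,C^n) and connecting homomorphisms G(ι_n) : G(M(E_n,C^n)) → G(M(E_{n+1},C^{n+1})). Then the natural homomorphism G(M(E,C)) → lim_n G(M(E_n,C^n)) into the direct limit is a split monomorphism whose cokernel is a free abelian group; more precisely, there exist finite subsets W_k ⊆ E_k^{0,0} (k ≥ 2) such that lim_n G(M(E_n,C^n)) ≅ G(M(E,C)) ⊕ (⊕_{k≥2} ℤ^(W_k)). -/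
/-- The canonical sequence `(E_n, C^n)` of finite bipartite separated graphs
associated to `(E,C)`: `(E_0,C^0) = (E,C)` and `(E_{n+1},C^{n+1}) = ((E_n)₁,(C^n)¹)`. -/
def seqG (G : BSG) : ℕ → BSG
  | 0 => G
  | n + 1 => (seqG G n).next

/-- The defining relations of the graph monoid `M(E,C)` of a bipartite separated
graph. -/
def BipRel (H : BSG) {N : Type} [AddCommMonoid N] (a : H.V0 ⊕ H.V1 → N) : Prop :=
  ∀ v : H.V0, ∀ Y ∈ H.C v, a (Sum.inl v) = ∑ᶠ e ∈ Y, a (Sum.inr (H.s e))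

/-- `(M, a)` is the graph monoid `M(E,C)` of the bipartite separated graph `H`. -/
def IsBipGraphMonoid (H : BSG) {M : Type} [AddCommMonoid M] (a : H.V0 ⊕ H.V1 → M) : Prop :=
  BipRel H a ∧ ∀ (N : Type) [AddCommMonoid N] (b : H.V0 ⊕ H.V1 → N), BipRel H b →
    ∃! φ : M →+ N, ∀ p, φ (a p) = b p

/-- `(GM, ι)` is the universal (Grothendieck) group of the commutative monoid `M`. -/
def IsGroth {M GM : Type} [AddCommMonoid M] [AddCommGroup GM] (ι : M →+ GM) : Prop :=
  ∀ (H : Type) [AddCommGroup H] (f : M →+ H), ∃! φ : GM →+ H, φ.comp ι = f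

/-!
Fix a base edge in every class `X ∈ C_u`. The group `G(M(E₁,C¹))` is generated by the elements
`a_w` (`w ∈ E^{0,1}`) and the tuples `t ∈ T_u = ∏_{X ∈ C_u} X`, subject only to
`a_{s(x)} = Σ_{tᵢ = x} t`. In `ℤ^{T_u}` the cylinders `Σ_{tᵢ = x} t` at non-base edges `x`, the
sum of all tuples, and the tuples differing from the base tuple in at least two coordinates form
a basis. The first two kinds are the images of `a_{s(x)}` and `a_u` under `G(ι)`, and the relation
`a_u = Σ_{x ∈ X} a_{s(x)}` accounts for the cylinders at base edges. Hence `G(ι)` is split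
injective with cokernel free on the tuples of the third kind, and composing these splittings
along the canonical sequence identifies the direct limit with `G(M(E,C)) ⊕ ⊕_k ℤ^{W_k}`.
-/

open Finset

section HammingDist

variable {ι : Type*} [Fintype ι] {X : ι → Type*} [∀ i, DecidableEq (X i)] {t b : ∀ i, X i}

theorem two_le_hammingDist {i j : ι} (hij : i ≠ j) (hi : t i ≠ b i) (hj : t j ≠ b j) :
    2 ≤ hammingDist t b :=
  Finset.one_lt_card.2 ⟨i, by simpa using hi, j, by simpa using hj, hij⟩

theorem eq_of_hammingDist_le_one (h : hammingDist t b ≤ 1) {i j : ι} (hi : t i ≠ b i)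
    (hji : j ≠ i) : t j = b j := by
  by_contra hj
  have := two_le_hammingDist hji.symm hi hj
  omega

theorem hammingDist_update_le_one [DecidableEq ι] (i : ι) (x : X i) :
    hammingDist (Function.update b i x) b ≤ 1 := by
  refine (Finset.card_le_card fun j hj => ?_).trans (Finset.card_singleton i).le
  by_contra hji
  simp_all [Function.update_of_ne (by simpa using hji : j ≠ i)]

end HammingDist

section CylinderBasis

variable (R : Type*) [Ring R] {ι : Type*} [Fintype ι] [DecidableEq ι] {X : ι → Type*}
  [∀ i, Fintype (X i)]

noncomputable def allOnes : (∀ i, X i) →₀ R :=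
  ∑ t, Finsupp.single t 1

variable {R} in
theorem linearCombination_allOnes {M : Type*} [AddCommGroup M] [Module R M]
    (f : (∀ i, X i) → M) : Finsupp.linearCombination R f (allOnes R) = ∑ t, f t := by
  simp [allOnes, map_sum]

variable [∀ i, DecidableEq (X i)]

noncomputable def cylinder (i : ι) (x : X i) : (∀ i, X i) →₀ R :=
  ∑ t with t i = x, Finsupp.single t 1

abbrev CylinderIndex (b : ∀ i, X i) : Type _ :=
  (Σ i, {x : X i // x ≠ b i}) ⊕ Option {t : ∀ i, X i // 2 ≤ hammingDist t b}

noncomputable def cylinderFamily (b : ∀ i, X i) : CylinderIndex b → ((∀ i, X i) →₀ R)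
  | .inl j => cylinder R j.1 j.2
  | .inr none => allOnes R
  | .inr (some t) => Finsupp.single t.1 1

variable {R}

@[simp]
theorem cylinder_apply (i : ι) (x : X i) (τ : ∀ i, X i) :
    cylinder R i x τ = if τ i = x then 1 else 0 := by
  simp [cylinder, Finsupp.finsetSum_apply, Finsupp.single_apply]

@[simp]
theorem allOnes_apply (τ : ∀ i, X i) : allOnes R τ = 1 := by
  simp [allOnes, Finsupp.finsetSum_apply, Finsupp.single_apply]

theorem sum_cylinder (i : ι) : ∑ x, cylinder R i x = allOnes (X := X) R := by
  ext τ
  simp [Finsupp.finsetSum_apply]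

theorem linearCombination_cylinder {M : Type*} [AddCommGroup M] [Module R M]
    (f : (∀ i, X i) → M) (i : ι) (x : X i) :
    Finsupp.linearCombination R f (cylinder R i x) = ∑ t with t i = x, f t := by
  simp [cylinder, map_sum]

variable (b : ∀ i, X i)

theorem linearIndependent_cylinderFamily : LinearIndependent R (cylinderFamily R b) := by
  rw [Fintype.linearIndependent_iff]
  intro c hc
  have hev : ∀ τ, ∑ j, c j * cylinderFamily R b j τ = 0 := fun τ => by
    simpa [Finsupp.finsetSum_apply] using DFunLike.congr_fun hc τ
  have hne : ∀ t : {t : ∀ i, X i // 2 ≤ hammingDist t b}, t.1 ≠ b := fun t h => by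
    have := t.2; rw [h, hammingDist_self] at this; omega
  have hcyl : ∀ j : Σ i, {x : X i // x ≠ b i}, (j.2 : X j.1) ≠ b j.1 := fun j => j.2.2
  have hnone : c (.inr none) = 0 := by
    simpa [cylinderFamily, Finsupp.single_apply, hne, hcyl, eq_comm (a := b _)] using hev b
  have hinl : ∀ j, c (.inl j) = 0 := by
    rintro ⟨i, x⟩
    have hsel : ∀ j : Σ i, {x : X i // x ≠ b i},
        Function.update b i x j.1 = j.2 ↔ j = ⟨i, x⟩ := by
      rintro ⟨i', x'⟩
      by_cases h : i' = i
      · subst h; simp [Subtype.ext_iff, eq_comm]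
      · simp [h, Ne.symm x'.2]
    have hfar : ∀ t : {t : ∀ i, X i // 2 ≤ hammingDist t b}, t.1 ≠ Function.update b i x :=
      fun t h => by
        have := hammingDist_update_le_one (b := b) i x.1
        rw [← h] at this
        exact absurd t.2 (by omega)
    simpa [cylinderFamily, Finsupp.single_apply, hnone, hsel, hfar]
      using hev (Function.update b i x)
  rintro (j | _ | t)
  · exact hinl j
  · exact hnone
  · simpa [cylinderFamily, Finsupp.single_apply, hnone, hinl, Subtype.val_inj] using hev t

theorem single_mem_span_cylinderFamily (t : ∀ i, X i) :
    Finsupp.single t 1 ∈ Submodule.span R (Set.range (cylinderFamily R b)) := by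
  set S := Submodule.span R (Set.range (cylinderFamily R b))
  have far : ∀ t, 2 ≤ hammingDist t b → Finsupp.single t (1 : R) ∈ S :=
    fun t ht => Submodule.subset_span ⟨.inr (some ⟨t, ht⟩), rfl⟩
  have near : ∀ t, hammingDist t b = 1 → Finsupp.single t (1 : R) ∈ S := by
    intro t ht
    obtain ⟨i, hi⟩ : ∃ i, t i ≠ b i := by
      by_contra! h; rw [funext h, hammingDist_self] at ht; omega
    have hsplit : Finsupp.single t (1 : R) = cylinder R i (t i) -
        ∑ t' ∈ ({t' | t' i = t i} : Finset _).erase t, Finsupp.single t' 1 := by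
      rw [cylinder, ← add_sum_erase _ _ (by simp : t ∈ ({t' | t' i = t i} : Finset _))]
      abel
    rw [hsplit]
    refine S.sub_mem (Submodule.subset_span ⟨.inl ⟨i, t i, hi⟩, rfl⟩)
      (S.sum_mem fun t' ht' => far t' ?_)
    obtain ⟨hne, ht'i⟩ : t' ≠ t ∧ t' i = t i := by simpa using ht'
    obtain ⟨j, hj⟩ : ∃ j, t' j ≠ t j := by by_contra! h; exact hne (funext h)
    have hji : j ≠ i := by rintro rfl; exact hj ht'i
    rw [eq_of_hammingDist_le_one ht.le hi hji] at hj
    exact two_le_hammingDist hji.symm (ht'i ▸ hi) hj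
  have off : ∀ t, t ≠ b → Finsupp.single t (1 : R) ∈ S := by
    intro t ht
    have := hammingDist_pos.2 ht
    rcases Nat.lt_or_ge (hammingDist t b) 2 with h | h
    · exact near t (by omega)
    · exact far t h
  by_cases ht : t = b
  · have hsplit : Finsupp.single b (1 : R) =
        allOnes R - ∑ t ∈ univ.erase b, Finsupp.single t 1 := by
      rw [allOnes, ← add_sum_erase _ _ (mem_univ b)]
      abel
    rw [ht, hsplit]
    exact S.sub_mem (Submodule.subset_span ⟨.inr none, rfl⟩)
      (S.sum_mem fun t ht => off t (Finset.ne_of_mem_erase ht))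
  · exact off t ht

theorem span_cylinderFamily : ⊤ ≤ Submodule.span R (Set.range (cylinderFamily R b)) := by
  rw [← (Finsupp.basisSingleOne (R := R)).span_eq, Submodule.span_le]
  rintro _ ⟨t, rfl⟩
  simpa using single_mem_span_cylinderFamily b t

variable (R) in
noncomputable def cylinderBasis : Module.Basis (CylinderIndex b) R ((∀ i, X i) →₀ R) :=
  .mk (linearIndependent_cylinderFamily b) (span_cylinderFamily b)

@[simp]
theorem cylinderBasis_apply (j : CylinderIndex b) : cylinderBasis R b j = cylinderFamily R b j :=
  Module.Basis.mk_apply _ _ _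

end CylinderBasis

namespace BSG

abbrev Tuple (F : BSG) (u : F.V0) : Type := (X : {X : Set F.E // X ∈ F.C u}) → ↥X.1

variable {F : BSG}

instance [Finite F.V0] [Finite F.E] : Finite F.NewVert :=
  inferInstanceAs (Finite (Σ u : F.V0, F.Tuple u))

instance [Finite F.V0] [Finite F.E] : Finite F.NewEdge :=
  inferInstanceAs (Finite (Σ p : F.NewVert, {X : Set F.E // X ∈ F.C p.1}))

theorem Valid.eq_of_mem_of_mem_s16 (hF : F.Valid) {u : F.V0} {X Y : Set F.E} (hX : X ∈ F.C u)
    (hY : Y ∈ F.C u) {x : F.E} (hxX : x ∈ X) (hxY : x ∈ Y) : X = Y := by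
  by_contra hne
  exact Set.disjoint_left.1 (hF.disj u hX hY hne) hxX hxY

theorem Valid.next (hF : F.Valid) : F.next.Valid := by
  have := hF.finV0
  have := hF.finE
  refine ⟨hF.finV1, inferInstanceAs (Finite F.NewVert), inferInstanceAs (Finite F.NewEdge),
    ?_, ?_, ?_, ?_, ?_, ?_⟩
  · rintro v X ⟨x, rfl, rfl⟩ e rfl
    rfl
  · rintro v X ⟨x, -, rfl⟩
    obtain ⟨X₀, hX₀, hxX₀⟩ := hF.cover x
    let t : F.Tuple (F.r x) := fun i => ⟨_, (hF.nonempty_class _ i.1 i.2).some_mem⟩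
    exact ⟨⟨⟨F.r x, Function.update t ⟨X₀, hX₀⟩ ⟨x, hxX₀⟩⟩, ⟨X₀, hX₀⟩⟩,
      congrArg Subtype.val (Function.update_self _ _ t)⟩
  · rintro v X ⟨x, -, rfl⟩ Y ⟨y, -, rfl⟩ hne
    refine Set.disjoint_left.2 fun e hx hy => hne ?_
    rw [← (show F.edgeOf e = x from hx), ← (show F.edgeOf e = y from hy)]
  · intro e
    exact ⟨F.Xof (F.edgeOf e), ⟨F.edgeOf e, rfl, rfl⟩, rfl⟩
  · intro w
    obtain ⟨x, rfl⟩ := hF.s_surj w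
    exact ⟨F.Xof x, x, rfl, rfl⟩
  · intro p
    obtain ⟨X, hX⟩ := hF.C_nonempty p.1
    exact ⟨⟨p, ⟨X, hX⟩⟩, rfl⟩

end BSG

theorem valid_seqG {G : BSG} (hG : G.Valid) : ∀ n, (seqG G n).Valid
  | 0 => hG
  | n + 1 => (valid_seqG hG n).next

namespace BSG

open scoped Classical

variable {F : BSG} [Fintype F.E]

theorem finsum_mem_Xof (hF : F.Valid) {β : Type*} [AddCommMonoid β] (f : F.NewVert → β)
    {u : F.V0} (i : {X : Set F.E // X ∈ F.C u}) (x : ↥i.1) :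
    ∑ᶠ e ∈ F.Xof x, f e.1 = ∑ t : F.Tuple u with t i = x, f ⟨u, t⟩ := by
  rw [← finsum_mem_coe_finset]
  refine (finsum_mem_eq_of_bijOn (fun t : F.Tuple u => (⟨⟨u, t⟩, i⟩ : F.NewEdge))
    ⟨?_, ?_, ?_⟩ fun _ _ => rfl).symm
  · intro t ht
    show ((t i : ↥i.1) : F.E) = x
    rw [(mem_filter.1 ht).2]
  · intro t₁ _ t₂ _ h
    exact eq_of_heq (Sigma.mk.inj_iff.1 (Sigma.mk.inj_iff.1 h).1).2
  · rintro ⟨⟨u', t⟩, i'⟩ (he : ((t i' : ↥i'.1) : F.E) = x)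
    obtain rfl : u' = u := (hF.mem_r u' i'.1 i'.2 _ (t i').2).symm.trans
      (he ▸ hF.mem_r u i.1 i.2 _ x.2)
    obtain rfl : i' = i := Subtype.ext (hF.eq_of_mem_of_mem_s16 i'.2 i.2 (he ▸ (t i').2) x.2)
    exact ⟨t, by simpa using Subtype.ext he, rfl⟩

theorem bipRel_next_iff (hF : F.Valid) {N : Type} [AddCommMonoid N]
    {c : F.next.V0 ⊕ F.next.V1 → N} :
    BipRel F.next c ↔ ∀ (u : F.V0) (i : {X : Set F.E // X ∈ F.C u}) (x : ↥i.1),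
      c (.inl (F.s x)) = ∑ t : F.Tuple u with t i = x, c (.inr ⟨u, t⟩) := by
  constructor
  · intro hc u i x
    rw [hc (F.s x) (F.Xof x) ⟨x, rfl, rfl⟩]
    exact finsum_mem_Xof hF (fun p => c (.inr p)) i x
  · rintro hc w _ ⟨x, rfl, rfl⟩
    obtain ⟨X, hX, hxX⟩ := hF.cover x
    rw [hc _ ⟨X, hX⟩ ⟨x, hxX⟩]
    exact (finsum_mem_Xof hF (fun p => c (.inr p)) ⟨X, hX⟩ ⟨x, hxX⟩).symm

end BSG

def IsBipGraphGroup (H : BSG) {A : Type} [AddCommGroup A] (a : H.V0 ⊕ H.V1 → A) : Prop :=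
  BipRel H a ∧ ∀ (N : Type) [AddCommGroup N] (c : H.V0 ⊕ H.V1 → N), BipRel H c →
    ∃! φ : A →+ N, ∀ p, φ (a p) = c p

section BipRel

variable {H : BSG} [Finite H.E]

theorem BipRel.map {N N' : Type} [AddCommMonoid N] [AddCommMonoid N'] {a : H.V0 ⊕ H.V1 → N}
    (h : BipRel H a) (f : N →+ N') : BipRel H (fun p => f (a p)) := by
  intro v Y hY
  dsimp only
  rw [h v Y hY, AddMonoidHom.map_finsum_mem _ _ (Set.toFinite Y)]

theorem IsBipGraphMonoid.isBipGraphGroup {M GM : Type} [AddCommMonoid M] [AddCommGroup GM]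
    {a : H.V0 ⊕ H.V1 → M} (hM : IsBipGraphMonoid H a) {ι : M →+ GM} (hι : IsGroth ι) :
    IsBipGraphGroup H (fun p => ι (a p)) := by
  refine ⟨hM.1.map ι, fun N _ c hc => ?_⟩
  obtain ⟨φ, hφ, hφu⟩ := hM.2 N c hc
  obtain ⟨Φ, hΦ, hΦu⟩ := hι N φ
  refine ⟨Φ, fun p => ?_, fun Φ' hΦ' => hΦu Φ' (hφu _ hΦ')⟩
  rw [← hφ, ← hΦ, AddMonoidHom.comp_apply]

theorem IsBipGraphGroup.hom_ext {A N : Type} [AddCommGroup A] [AddCommGroup N]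
    {a : H.V0 ⊕ H.V1 → A} (h : IsBipGraphGroup H a) {φ ψ : A →+ N}
    (hφψ : ∀ p, φ (a p) = ψ (a p)) : φ = ψ :=
  (h.2 N _ (h.1.map ψ)).unique hφψ fun _ => rfl

end BipRel

namespace BSG

open scoped Classical

variable {F : BSG} [Fintype F.E] (b : ∀ u, F.Tuple u) {A B : Type} [AddCommGroup A]
  [AddCommGroup B]

def farVerts : Set F.NewVert := {p | 2 ≤ hammingDist p.2 (b p.1)}

noncomputable def splitting (a : F.V0 ⊕ F.V1 → A) (u : F.V0) :
    (F.Tuple u →₀ ℤ) →ₗ[ℤ] A × (F.farVerts b →₀ ℤ) :=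
  (cylinderBasis ℤ (b u)).constr ℤ fun
    | .inl j => (a (.inr (F.s j.2.1)), 0)
    | .inr none => (a (.inl u), 0)
    | .inr (some t) => (0, Finsupp.single ⟨⟨u, t.1⟩, t.2⟩ 1)

noncomputable def farLift (c : F.next.V0 ⊕ F.next.V1 → B) : (F.farVerts b →₀ ℤ) →+ B :=
  (Finsupp.linearCombination ℤ fun w : F.farVerts b => c (.inr w.1)).toAddMonoidHom

variable {b} {a : F.V0 ⊕ F.V1 → A}

theorem splitting_cylinder_of_ne {u : F.V0} (i : {X : Set F.E // X ∈ F.C u}) (x : ↥i.1)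
    (hx : x ≠ b u i) : splitting b a u (cylinder ℤ i x) = (a (.inr (F.s x)), 0) := by
  change splitting b a u (cylinderFamily ℤ (b u) (.inl ⟨i, x, hx⟩)) = _
  rw [← cylinderBasis_apply]
  exact (cylinderBasis ℤ (b u)).constr_basis ℤ _ _

theorem splitting_allOnes (u : F.V0) : splitting b a u (allOnes ℤ) = (a (.inl u), 0) := by
  change splitting b a u (cylinderFamily ℤ (b u) (.inr none)) = _
  rw [← cylinderBasis_apply]
  exact (cylinderBasis ℤ (b u)).constr_basis ℤ _ _

theorem splitting_single {u : F.V0} (t : F.Tuple u) (ht : 2 ≤ hammingDist t (b u)) :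
    splitting b a u (Finsupp.single t 1) = (0, Finsupp.single ⟨⟨u, t⟩, ht⟩ 1) := by
  change splitting b a u (cylinderFamily ℤ (b u) (.inr (some ⟨t, ht⟩))) = _
  rw [← cylinderBasis_apply]
  exact (cylinderBasis ℤ (b u)).constr_basis ℤ _ _

theorem splitting_cylinder (ha : BipRel F a) {u : F.V0} (i : {X : Set F.E // X ∈ F.C u})
    (x : ↥i.1) : splitting b a u (cylinder ℤ i x) = (a (.inr (F.s x)), 0) := by
  obtain hx | rfl := ne_or_eq x (b u i)
  · exact splitting_cylinder_of_ne i x hx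
  have hrel : a (.inl u) = ∑ y : ↥i.1, a (.inr (F.s y)) := by
    rw [ha u i.1 i.2, ← finsum_set_coe_eq_finsum_mem, finsum_eq_sum_of_fintype]
  have hsum : ∑ y : ↥i.1, (splitting b a u (cylinder ℤ i y) - (a (.inr (F.s y)), 0)) = 0 := by
    rw [sum_sub_distrib, ← map_sum, sum_cylinder (X := fun i : {X // X ∈ F.C u} => ↥i.1),
      splitting_allOnes, hrel]
    simp [Prod.ext_iff, Prod.fst_sum, Prod.snd_sum]
  rw [Fintype.sum_eq_single (b u i) fun y hy => by
    rw [splitting_cylinder_of_ne i y hy, sub_self]] at hsum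
  exact sub_eq_zero.1 hsum

variable {c : F.next.V0 ⊕ F.next.V1 → B}

theorem coprod_farLift_splitting (hF : F.Valid) (hc : BipRel F.next c) (g : A →+ B)
    (hg0 : ∀ u : F.V0, g (a (.inl u)) = ∑ᶠ t : F.Tuple u, c (.inr ⟨u, t⟩))
    (hg1 : ∀ w : F.V1, g (a (.inr w)) = c (.inl w)) (ha : BipRel F a) (u : F.V0)
    (τ : F.Tuple u →₀ ℤ) :
    g.coprod (farLift b c) (splitting b a u τ) =
      Finsupp.linearCombination ℤ (fun t => c (.inr ⟨u, t⟩)) τ := by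
  suffices (g.coprod (farLift b c)).toIntLinearMap ∘ₗ splitting b a u =
      Finsupp.linearCombination ℤ (fun t => c (.inr ⟨u, t⟩)) from LinearMap.congr_fun this τ
  refine (cylinderBasis ℤ (b u)).ext fun j => ?_
  rw [cylinderBasis_apply, LinearMap.comp_apply, AddMonoidHom.coe_toIntLinearMap]
  rcases j with ⟨i, x, hx⟩ | _ | ⟨t, ht⟩
  · rw [cylinderFamily, splitting_cylinder ha, AddMonoidHom.coprod_apply, map_zero, add_zero,
      hg1, (bipRel_next_iff hF).1 hc u i x, linearCombination_cylinder]
  · rw [cylinderFamily, splitting_allOnes, AddMonoidHom.coprod_apply, map_zero, add_zero, hg0,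
      linearCombination_allOnes, finsum_eq_sum_of_fintype]
  · simp [cylinderFamily, splitting_single t ht, farLift]

variable (b) in
noncomputable def retractionGens (a : F.V0 ⊕ F.V1 → A) :
    F.next.V0 ⊕ F.next.V1 → A × (F.farVerts b →₀ ℤ)
  | .inl w => (a (.inr w), 0)
  | .inr p => splitting b a p.1 (Finsupp.single p.2 1)

theorem bipRel_retractionGens (hF : F.Valid) (ha : BipRel F a) :
    BipRel F.next (retractionGens b a) := by
  refine (bipRel_next_iff hF).2 fun u i x => ?_
  change (a (.inr (F.s x)), 0) =
    ∑ t : F.Tuple u with t i = x, splitting b a u (Finsupp.single t 1)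
  rw [← map_sum]
  exact (splitting_cylinder ha i x).symm

end BSG

theorem BSG.Valid.exists_addEquiv_next {F : BSG} (hF : F.Valid) {A B : Type} [AddCommGroup A]
    [AddCommGroup B] {a : F.V0 ⊕ F.V1 → A} {c : F.next.V0 ⊕ F.next.V1 → B}
    (ha : IsBipGraphGroup F a) (hc : IsBipGraphGroup F.next c) (g : A →+ B)
    (hg0 : ∀ u : F.V0, g (a (.inl u)) = ∑ᶠ t : F.Tuple u, c (.inr ⟨u, t⟩))
    (hg1 : ∀ w : F.V1, g (a (.inr w)) = c (.inl w)) :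
    ∃ (W : Set F.NewVert) (e : B ≃+ A × (W →₀ ℤ)), ∀ x, e (g x) = (x, 0) := by
  classical
  have := hF.finV0
  have := hF.finE
  have : Finite F.next.E := hF.next.finE
  let := Fintype.ofFinite F.E
  let b : ∀ u, F.Tuple u := fun u i => ⟨_, (hF.nonempty_class u i.1 i.2).some_mem⟩
  obtain ⟨ψ, hψ, -⟩ := hc.2 _ (F.retractionGens b a) (F.bipRel_retractionGens hF ha.1)
  have hψg : ψ.comp g = AddMonoidHom.inl A _ := ha.hom_ext <| by
    rintro (u | w)
    · simp only [AddMonoidHom.comp_apply, hg0, finsum_eq_sum_of_fintype, map_sum, hψ]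
      exact (map_sum _ _ _).symm.trans (BSG.splitting_allOnes u)
    · simp [hg1, hψ, BSG.retractionGens]
  have hψlift : ψ.comp (F.farLift b c) = AddMonoidHom.inr A _ :=
    Finsupp.addHom_ext' fun w => AddMonoidHom.ext_int <| by
      simp only [BSG.farLift, AddMonoidHom.coe_comp, LinearMap.toAddMonoidHom_coe,
        Function.comp_apply, Finsupp.singleAddHom_apply, Finsupp.linearCombination_single,
        one_smul, hψ, BSG.retractionGens, BSG.splitting_single _ w.2, AddMonoidHom.inr_apply]
      rfl
  have hliftψ : (g.coprod (F.farLift b c)).comp ψ = AddMonoidHom.id B := hc.hom_ext <| by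
    rintro (w | p)
    · simpa [hψ, BSG.retractionGens] using hg1 w
    · simp only [AddMonoidHom.coe_comp, Function.comp_apply, hψ, BSG.retractionGens,
        BSG.coprod_farLift_splitting hF hc.1 g hg0 hg1 ha.1, Finsupp.linearCombination_single,
        one_smul, AddMonoidHom.id_apply]
      rfl
  refine ⟨_, ψ.toAddEquiv _ hliftψ ?_, fun x => DFunLike.congr_fun hψg x⟩
  rw [AddMonoidHom.comp_coprod, hψg, hψlift, AddMonoidHom.coprod_inl_inr]

section DirectLimit

variable {G : ℕ → Type} [∀ n, AddCommGroup (G n)] {Z : ℕ → Type} [∀ n, AddCommGroup (Z n)]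
  (e : ∀ n, G (n + 1) ≃+ G n × Z n)

noncomputable def toProdDFinsupp : ∀ n, G n →+ G 0 × Π₀ k, Z k
  | 0 => AddMonoidHom.inl _ _
  | n + 1 => ((toProdDFinsupp n).coprod
      ((AddMonoidHom.inr _ _).comp (DFinsupp.singleAddHom Z n))).comp (e n).toAddMonoidHom

theorem toProdDFinsupp_succ_apply (n : ℕ) (y : G (n + 1)) :
    toProdDFinsupp e (n + 1) y =
      toProdDFinsupp e n (e n y).1 + (0, DFinsupp.single n (e n y).2) :=
  rfl

variable {g : ∀ n, G n →+ G (n + 1)}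

theorem toProdDFinsupp_comp (he : ∀ n x, e n (g n x) = (x, 0)) (n : ℕ) :
    (toProdDFinsupp e (n + 1)).comp (g n) = toProdDFinsupp e n :=
  AddMonoidHom.ext fun x => by simp [toProdDFinsupp_succ_apply, he]

variable {L : Type} [AddCommGroup L] (ℓ : ∀ n, G n →+ L)

noncomputable def ofProdDFinsupp : G 0 × (Π₀ k, Z k) →+ L :=
  (ℓ 0).coprod (DFinsupp.liftAddHom fun k =>
    ((ℓ (k + 1)).comp (e k).symm.toAddMonoidHom).comp (AddMonoidHom.inr _ _))

theorem ofProdDFinsupp_comp_toProdDFinsupp (he : ∀ n x, e n (g n x) = (x, 0))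
    (hℓ : ∀ n, (ℓ (n + 1)).comp (g n) = ℓ n) (n : ℕ) :
    (ofProdDFinsupp e ℓ).comp (toProdDFinsupp e n) = ℓ n := by
  induction n with
  | zero => ext x; simp [ofProdDFinsupp, toProdDFinsupp]
  | succ n ih =>
    ext y
    have hg : g n (e n y).1 = (e n).symm ((e n y).1, 0) := by rw [AddEquiv.eq_symm_apply, he]
    have hy : y = (e n).symm ((e n y).1, 0) + (e n).symm (0, (e n y).2) := by
      rw [← map_add, Prod.mk_add_mk, add_zero, zero_add, AddEquiv.symm_apply_apply]
    rw [AddMonoidHom.comp_apply, toProdDFinsupp_succ_apply, map_add, ← AddMonoidHom.comp_apply,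
      ih, ← hℓ n, AddMonoidHom.comp_apply, hg]
    conv_rhs => rw [hy]
    simp [ofProdDFinsupp]

theorem exists_addEquiv_prod_dfinsupp_of_isDirectLimit (he : ∀ n x, e n (g n x) = (x, 0))
    (hℓ : ∀ n, (ℓ (n + 1)).comp (g n) = ℓ n)
    (hL : ∀ (H : Type) [AddCommGroup H] (h : ∀ n, G n →+ H),
      (∀ n, (h (n + 1)).comp (g n) = h n) → ∃! ψ : L →+ H, ∀ n, ψ.comp (ℓ n) = h n) :
    ∃ E : L ≃+ G 0 × (Π₀ k, Z k), ∀ x, E (ℓ 0 x) = (x, 0) := by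
  obtain ⟨ψ, hψ, -⟩ := hL _ (toProdDFinsupp e) (toProdDFinsupp_comp e he)
  have hofψ : (ofProdDFinsupp e ℓ).comp ψ = AddMonoidHom.id L :=
    (hL L ℓ hℓ).unique (fun n => by
      rw [AddMonoidHom.comp_assoc, hψ, ofProdDFinsupp_comp_toProdDFinsupp e ℓ he hℓ]) fun _ => rfl
  have hψof : ψ.comp (ofProdDFinsupp e ℓ) = AddMonoidHom.id _ := by
    rw [ofProdDFinsupp, AddMonoidHom.comp_coprod, hψ 0, ← AddMonoidHom.coprod_inl_inr]
    congr 1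
    refine DFinsupp.addHom_ext' fun k => AddMonoidHom.ext fun z => ?_
    simpa [toProdDFinsupp_succ_apply]
      using DFunLike.congr_fun (hψ (k + 1)) ((e k).symm (0, z))
  exact ⟨ψ.toAddEquiv _ hofψ hψof, fun x => DFunLike.congr_fun (hψ 0) x⟩

end DirectLimit

/-- Theorem 4.4 (K₀ for the tame algebra, monoid form): for a finite bipartite
separated graph `(E,C)` with canonical sequence `(E_n,C^n)` and connecting maps
`G(ι_n)`, the natural homomorphism `G(M(E,C)) → lim_n G(M(E_n,C^n))` is a split
monomorphism whose cokernel is free abelian: there are finite subsets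
`W_k ⊆ E_k^{0,0}` (`k ≥ 2`) with
`lim_n G(M(E_n,C^n)) ≅ G(M(E,C)) ⊕ (⊕_{k≥2} ℤ^(W_k))`. -/
theorem stmt16 (G : BSG) (hG : G.Valid)
    -- the monoids M(E_n, C^n)
    (M : ℕ → Type) [∀ n, AddCommMonoid (M n)]
    (a : ∀ n, ((seqG G n).V0 ⊕ (seqG G n).V1) → M n)
    (hM : ∀ n, IsBipGraphMonoid (seqG G n) (a n))
    -- the connecting monoid homomorphisms ι_n
    (φ : ∀ n, M n →+ M (n + 1))
    (hφ0 : ∀ n (u : (seqG G n).V0), φ n (a n (Sum.inl u)) =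
      ∑ᶠ t : ((X : {X : Set (seqG G n).E // X ∈ (seqG G n).C u}) → ↥X.1),
        a (n + 1) (Sum.inr (⟨u, t⟩ : (seqG G n).NewVert)))
    (hφ1 : ∀ n (w : (seqG G n).V1), φ n (a n (Sum.inr w)) = a (n + 1) (Sum.inl w))
    -- the Grothendieck groups G(M(E_n,C^n)) and the induced maps G(ι_n)
    (Gr : ℕ → Type) [∀ n, AddCommGroup (Gr n)]
    (ι : ∀ n, M n →+ Gr n) (hGr : ∀ n, IsGroth (ι n))
    (g : ∀ n, Gr n →+ Gr (n + 1))
    (hg : ∀ n, (g n).comp (ι n) = (ι (n + 1)).comp (φ n))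
    -- the direct limit L of the sequence (Gr n, g n)
    (L : Type) [AddCommGroup L] (ℓ : ∀ n, Gr n →+ L)
    (hℓ : ∀ n, (ℓ (n + 1)).comp (g n) = ℓ n)
    (hL : ∀ (H : Type) [AddCommGroup H] (h : ∀ n, Gr n →+ H),
      (∀ n, (h (n + 1)).comp (g n) = h n) → ∃! ψ : L →+ H, ∀ n, ψ.comp (ℓ n) = h n) :
    ∃ W : (k : ℕ) → Set ((seqG G k).V0), (∀ k, (W k).Finite) ∧
      ∃ e : L ≃+ (Gr 0 × (Π₀ k : ℕ, (↥(W (k + 2)) →₀ ℤ))),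
        ∀ x : Gr 0, e (ℓ 0 x) = (x, 0) := by
  have hval := valid_seqG hG
  have hpres : ∀ n, IsBipGraphGroup (seqG G n) (fun p => ι n (a n p)) := fun n =>
    have := (hval n).finE
    (hM n).isBipGraphGroup (hGr n)
  have hstep : ∀ n, ∃ (W : Set (seqG G n).NewVert) (e : Gr (n + 1) ≃+ Gr n × (W →₀ ℤ)),
      ∀ x, e (g n x) = (x, 0) := by
    intro n
    have := (hval n).finE
    refine (hval n).exists_addEquiv_next (hpres n) (hpres (n + 1)) (g n) (fun u => ?_) (fun w => ?_)
    · rw [← AddMonoidHom.comp_apply, hg, AddMonoidHom.comp_apply, hφ0,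
        AddMonoidHom.map_finsum _ (Set.toFinite _)]
      rfl
    · rw [← AddMonoidHom.comp_apply, hg, AddMonoidHom.comp_apply, hφ1]
      rfl
  choose W e he using hstep
  obtain ⟨E, hE⟩ := exists_addEquiv_prod_dfinsupp_of_isDirectLimit e ℓ he hℓ hL
  -- step `k` creates vertices of `E_{k+1}^{0,1} = E_{k+2}^{0,0}`
  refine ⟨fun | 0 => ∅ | 1 => ∅ | k + 2 => W k, ?_, E, hE⟩
  rintro (_ | _ | k)
  · exact Set.finite_empty
  · exact Set.finite_empty
  · have := (hval (k + 2)).finV0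
    exact Set.toFinite _
end
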